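/- arXiv:0801.1526 — 6 statements merged into one kernel-verified Lean document; each statement's English description precedes it below -/
import Mathlib

section
/- The map τ is well-defined on (W × W)/W(χ) for the diagonal right action: for every w ∈ W with wχ = χ and all w₁, w₂ ∈ W, one has τ(w₁ w, w₂ w) = τ(w₁, w₂). -/
open scoped InnerProductSpace

noncomputable section

/-- The reflection `s_α` in the hyperplane orthogonal to `α`. -/
def sRefl {V : Type*} [NormedAddCommGroup V] [InnerProductSpace ℝ V] [FiniteDimensional ℝ V]
    (α : V) : V ≃ₗᵢ[ℝ] V :=
  Submodule.reflection (ℝ ∙ α)ᗮ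

/-- `r_n(w) = {α ∈ Δ : ⟨α, χ⟩ = n and wα ∈ Δ⁺}`. -/
def rW {V : Type*} [NormedAddCommGroup V] [InnerProductSpace ℝ V]
    (Δ pos : Finset V) (χ : V) (n : ℤ) (w : V ≃ₗᵢ[ℝ] V) : Set V :=
  {α : V | α ∈ Δ ∧ ⟪α, χ⟫_ℝ = (n : ℝ) ∧ w α ∈ pos}

/-- `τ(w₁,w₂) = #(r₂(w₁) ∆ r₂(w₂)) − #(r₀(w₁) ∆ r₀(w₂))`. -/
def tau {V : Type*} [NormedAddCommGroup V] [InnerProductSpace ℝ V]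
    (Δ pos : Finset V) (χ : V) (w₁ w₂ : V ≃ₗᵢ[ℝ] V) : ℤ :=
  ((symmDiff (rW Δ pos χ 2 w₁) (rW Δ pos χ 2 w₂)).ncard : ℤ)
    - ((symmDiff (rW Δ pos χ 0 w₁) (rW Δ pos χ 0 w₂)).ncard : ℤ)

theorem stmt4
    {V : Type*} [NormedAddCommGroup V] [InnerProductSpace ℝ V] [FiniteDimensional ℝ V]
    (Δ pos Pi : Finset V) (χ : V)
    -- root system axioms: finite (a `Finset`), spanning, reduced, crystallographic,
    -- stable under negation and under the reflections `s_α`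
    (hspan : Submodule.span ℝ (Δ : Set V) = ⊤)
    (hzero : (0 : V) ∉ Δ)
    (hsym : ∀ α ∈ Δ, -α ∈ Δ)
    (hred : ∀ α ∈ Δ, ∀ t : ℝ, t • α ∈ Δ → t = 1 ∨ t = -1)
    (hcrys : ∀ α ∈ Δ, ∀ β ∈ Δ, ∃ n : ℤ, 2 * ⟪β, α⟫_ℝ / ⟪α, α⟫_ℝ = (n : ℝ))
    (hrefl : ∀ α ∈ Δ, ∀ β ∈ Δ, sRefl α β ∈ Δ)
    -- positive roots and simple roots
    (hposΔ : pos ⊆ Δ)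
    (hpart : ∀ α ∈ Δ, (α ∈ pos ↔ -α ∉ pos))
    (hPipos : Pi ⊆ pos)
    (hindep : LinearIndependent ℝ (fun β : (Pi : Set V) => (β : V)))
    (hcomb : ∀ α ∈ pos, ∃ c : V → ℕ, α = ∑ β ∈ Pi, (c β : ℝ) • β)
    -- the Weyl group, generated by the reflections in the roots
    (W : Subgroup (V ≃ₗᵢ[ℝ] V))
    (hW : W = Subgroup.closure {e : V ≃ₗᵢ[ℝ] V | ∃ α ∈ Δ, e = sRefl α})
    -- the longest element `w₀`, with `w₀ (Δ⁺) = −Δ⁺`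
    (w0 : V ≃ₗᵢ[ℝ] V) (hw0W : w0 ∈ W)
    (hw0pos : (fun x => w0 x) '' (pos : Set V) = (fun x => -x) '' (pos : Set V))
    :
    ∀ w : V ≃ₗᵢ[ℝ] V, w ∈ W → w χ = χ →
      ∀ w₁ : V ≃ₗᵢ[ℝ] V, w₁ ∈ W → ∀ w₂ : V ≃ₗᵢ[ℝ] V, w₂ ∈ W →
        tau Δ pos χ (w₁ * w) (w₂ * w) = tau Δ pos χ w₁ w₂ := by
  
  classical
  have hstab : ∀ u : V ≃ₗᵢ[ℝ] V, u ∈ W → ∀ α ∈ Δ, u α ∈ Δ := by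
    intro u hu
    rw [hW] at hu
    induction hu using Subgroup.closure_induction with
    | mem x hx =>
      obtain ⟨α, hα, rfl⟩ := hx
      exact fun β hβ => hrefl α hα β hβ
    | one => simp only [LinearIsometryEquiv.coe_one, id_eq]; exact fun α hα => hα
    | mul x y hx hy ihx ihy =>
      intro α hα
      simpa using ihx (y α) (ihy α hα)
    | inv x hx ih =>
      intro α hα
      have himg : Finset.image (⇑x) Δ = Δ :=
        Finset.eq_of_subset_of_card_le
          (by intro b hb
              obtain ⟨β, hβ, rfl⟩ := Finset.mem_image.mp hb
              exact ih β hβ)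
          (le_of_eq (Finset.card_image_of_injective _ x.injective).symm)
      obtain ⟨β, hβ, hb⟩ := Finset.mem_image.mp (himg ▸ hα)
      have : x⁻¹ α = β := by
        have : x.symm (x β) = x.symm α := by rw [hb]
        simpa using this.symm
      rw [this]; exact hβ
  intro w hwW hwχ w₁ hw₁ w₂ hw₂
  have hwinv : w⁻¹ ∈ W := inv_mem hwW
  have key : ∀ (n : ℤ) (u : V ≃ₗᵢ[ℝ] V),
      rW Δ pos χ n (u * w) = (⇑w.symm) '' rW Δ pos χ n u := by
    intro n u
    ext α
    constructor
    · rintro ⟨hαΔ, hin, hp⟩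
      refine ⟨w α, ⟨hstab w hwW α hαΔ, ?_, hp⟩, w.symm_apply_apply α⟩
      rw [← hwχ]
      rw [LinearIsometryEquiv.inner_map_map]
      exact hin
    · rintro ⟨β, ⟨hβΔ, hin, hp⟩, rfl⟩
      have h1 : w (w.symm β) = β := w.apply_symm_apply β
      refine ⟨?_, ?_, ?_⟩
      · have := hstab w⁻¹ hwinv β hβΔ
        simpa using this
      · calc ⟪w.symm β, χ⟫_ℝ = ⟪w (w.symm β), w χ⟫_ℝ :=
              (LinearIsometryEquiv.inner_map_map w _ _).symm
          _ = ⟪β, χ⟫_ℝ := by rw [h1, hwχ]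
          _ = (n : ℝ) := hin
      · show u (w (w.symm β)) ∈ pos
        rw [h1]; exact hp
  unfold tau
  rw [key 2 w₁, key 2 w₂, key 0 w₁, key 0 w₂,
      ← Set.image_symmDiff w.symm.injective, ← Set.image_symmDiff w.symm.injective,
      Set.ncard_image_of_injective _ w.symm.injective,
      Set.ncard_image_of_injective _ w.symm.injective]
end
end

section
/- Assume w₀χ = −χ. Then for all w₁, w₂ ∈ W one has τ(w₁ w₀, w₂ w₀) = τ(w₁, w₂). -/
open scoped InnerProductSpace

noncomputable section

theorem stmt5
    {V : Type*} [NormedAddCommGroup V] [InnerProductSpace ℝ V] [FiniteDimensional ℝ V]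
    (Δ pos Pi : Finset V) (χ : V)
    -- root system axioms: finite (a `Finset`), spanning, reduced, crystallographic,
    -- stable under negation and under the reflections `s_α`
    (hspan : Submodule.span ℝ (Δ : Set V) = ⊤)
    (hzero : (0 : V) ∉ Δ)
    (hsym : ∀ α ∈ Δ, -α ∈ Δ)
    (hred : ∀ α ∈ Δ, ∀ t : ℝ, t • α ∈ Δ → t = 1 ∨ t = -1)
    (hcrys : ∀ α ∈ Δ, ∀ β ∈ Δ, ∃ n : ℤ, 2 * ⟪β, α⟫_ℝ / ⟪α, α⟫_ℝ = (n : ℝ))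
    (hrefl : ∀ α ∈ Δ, ∀ β ∈ Δ, sRefl α β ∈ Δ)
    -- positive roots and simple roots
    (hposΔ : pos ⊆ Δ)
    (hpart : ∀ α ∈ Δ, (α ∈ pos ↔ -α ∉ pos))
    (hPipos : Pi ⊆ pos)
    (hindep : LinearIndependent ℝ (fun β : (Pi : Set V) => (β : V)))
    (hcomb : ∀ α ∈ pos, ∃ c : V → ℕ, α = ∑ β ∈ Pi, (c β : ℝ) • β)
    -- the Weyl group, generated by the reflections in the roots
    (W : Subgroup (V ≃ₗᵢ[ℝ] V))
    (hW : W = Subgroup.closure {e : V ≃ₗᵢ[ℝ] V | ∃ α ∈ Δ, e = sRefl α})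
    -- the longest element `w₀`, with `w₀ (Δ⁺) = −Δ⁺`
    (w0 : V ≃ₗᵢ[ℝ] V) (hw0W : w0 ∈ W)
    (hw0pos : (fun x => w0 x) '' (pos : Set V) = (fun x => -x) '' (pos : Set V))
    -- assume `w₀ χ = −χ`
    (hw0chi : w0 χ = -χ) :
    ∀ w₁ : V ≃ₗᵢ[ℝ] V, w₁ ∈ W → ∀ w₂ : V ≃ₗᵢ[ℝ] V, w₂ ∈ W →
      tau Δ pos χ (w₁ * w0) (w₂ * w0) = tau Δ pos χ w₁ w₂ := by
  classical
  intro w₁ hw₁ w₂ hw₂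
  -- every element of W maps Δ into Δ
  have hWΔ : ∀ e ∈ W, ∀ α ∈ Δ, e α ∈ Δ := by
    intro e he
    rw [hW] at he
    induction he using Subgroup.closure_induction with
    | mem x hx =>
        obtain ⟨α, hα, rfl⟩ := hx
        intro β hβ; exact hrefl α hα β hβ
    | one => intro β hβ; simpa using hβ
    | mul x y hx hy ihx ihy =>
        intro β hβ
        have : (x * y) β = x (y β) := rfl
        rw [this]; exact ihx _ (ihy β hβ)
    | inv x hx ih =>
        intro β hβ
        have himg : Δ.image x = Δ :=
          Finset.eq_of_subset_of_card_le
            (fun γ hγ => by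
              obtain ⟨δ, hδ, rfl⟩ := Finset.mem_image.mp hγ
              exact ih δ hδ)
            (le_of_eq (Finset.card_image_of_injective _ x.injective).symm)
        rw [← himg] at hβ
        obtain ⟨δ, hδ, rfl⟩ := Finset.mem_image.mp hβ
        have : x⁻¹ (x δ) = δ := x.symm_apply_apply δ
        rw [this]; exact hδ
  have hw0Δ : ∀ α ∈ Δ, w0 α ∈ Δ := hWΔ w0 hw0W
  have hw0invΔ : ∀ α ∈ Δ, w0.symm α ∈ Δ := hWΔ w0⁻¹ (inv_mem hw0W)
  -- inner product flip
  have hip : ∀ α : V, ⟪w0 α, χ⟫_ℝ = -⟪α, χ⟫_ℝ := by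
    intro α
    have h1 : ⟪w0 α, w0 χ⟫_ℝ = ⟪α, χ⟫_ℝ := w0.inner_map_map α χ
    rw [hw0chi, inner_neg_right] at h1
    linarith
  -- the level sets
  -- key bijection for n = 0
  have key0 : ∀ w : V ≃ₗᵢ[ℝ] V,
      (fun x => w0 x) '' rW Δ pos χ 0 (w * w0) = rW Δ pos χ 0 w := by
    intro w
    ext β
    constructor
    · rintro ⟨α, ⟨hαΔ, hαχ, hαpos⟩, rfl⟩
      refine ⟨hw0Δ α hαΔ, by rw [hip]; simpa using congrArg Neg.neg hαχ, hαpos⟩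
    · rintro ⟨hβΔ, hβχ, hβpos⟩
      refine ⟨w0.symm β, ⟨hw0invΔ β hβΔ, ?_, ?_⟩, w0.apply_symm_apply β⟩
      · have h := hip (w0.symm β)
        rw [w0.apply_symm_apply] at h
        push_cast at hβχ ⊢
        linarith
      · have h2 : (w * w0) (w0.symm β) = w β := by
          have : (w * w0) (w0.symm β) = w (w0 (w0.symm β)) := rfl
          rw [this, w0.apply_symm_apply]
        rw [h2]; exact hβpos
  -- key bijection for n = 2
  have key2 : ∀ w : V ≃ₗᵢ[ℝ] V, w ∈ W →
      (fun x => -(w0 x)) '' rW Δ pos χ 2 (w * w0)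
        = {β : V | β ∈ Δ ∧ ⟪β, χ⟫_ℝ = (2 : ℝ) ∧ w β ∉ pos} := by
    intro w hwW
    ext β
    constructor
    · rintro ⟨α, ⟨hαΔ, hαχ, hαpos⟩, rfl⟩
      refine ⟨hsym _ (hw0Δ α hαΔ), ?_, ?_⟩
      · rw [inner_neg_left, hip]; push_cast at hαχ; linarith
      · have hwa : w (w0 α) ∈ pos := hαpos
        have h3 : w (-(w0 α)) = -(w (w0 α)) := by simp
        rw [h3]
        exact ((hpart _ (hposΔ hwa)).mp hwa)
    · rintro ⟨hβΔ, hβχ, hβpos⟩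
      refine ⟨w0.symm (-β), ⟨hw0invΔ _ (hsym β hβΔ), ?_, ?_⟩, ?_⟩
      · have := hip (w0.symm (-β))
        rw [w0.apply_symm_apply, inner_neg_left] at this
        push_cast
        linarith
      · have h2 : (w * w0) (w0.symm (-β)) = w (-β) := by
          have : (w * w0) (w0.symm (-β)) = w (w0 (w0.symm (-β))) := rfl
          rw [this, w0.apply_symm_apply]
        rw [h2]
        have hwβΔ : w β ∈ Δ := hWΔ w hwW β hβΔ
        have h3 : w (-β) = -(w β) := by simp
        rw [h3]
        by_contra hc
        exact hβpos ((hpart _ hwβΔ).mpr hc)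
      · show -(w0 (w0.symm (-β))) = β
        rw [w0.apply_symm_apply]; simp
  -- complements inside the level set
  have hcompl : ∀ w : V ≃ₗᵢ[ℝ] V,
      {β : V | β ∈ Δ ∧ ⟪β, χ⟫_ℝ = (2 : ℝ) ∧ w β ∉ pos}
        = {β : V | β ∈ Δ ∧ ⟪β, χ⟫_ℝ = (2 : ℝ)} \ rW Δ pos χ 2 w := by
    intro w
    ext β
    simp only [Set.mem_setOf_eq, Set.mem_diff, rW]
    push_cast
    tauto
  have hg : Function.Injective (fun x : V => -(w0 x)) :=
    fun a b h => w0.injective (neg_injective h)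
  -- first term
  have h2card : (symmDiff (rW Δ pos χ 2 (w₁ * w0)) (rW Δ pos χ 2 (w₂ * w0))).ncard
      = (symmDiff (rW Δ pos χ 2 w₁) (rW Δ pos χ 2 w₂)).ncard := by
    have himg : (fun x : V => -(w0 x)) '' symmDiff (rW Δ pos χ 2 (w₁ * w0)) (rW Δ pos χ 2 (w₂ * w0))
        = symmDiff ((fun x : V => -(w0 x)) '' rW Δ pos χ 2 (w₁ * w0))
            ((fun x : V => -(w0 x)) '' rW Δ pos χ 2 (w₂ * w0)) := by
      simp only [Set.symmDiff_def, Set.image_union, Set.image_diff hg]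
    have hsd : symmDiff ((fun x : V => -(w0 x)) '' rW Δ pos χ 2 (w₁ * w0))
            ((fun x : V => -(w0 x)) '' rW Δ pos χ 2 (w₂ * w0))
        = symmDiff (rW Δ pos χ 2 w₁) (rW Δ pos χ 2 w₂) := by
      rw [key2 w₁ hw₁, key2 w₂ hw₂, hcompl, hcompl]
      ext β
      simp only [Set.mem_symmDiff, Set.mem_diff, Set.mem_setOf_eq, rW]
      push_cast
      tauto
    calc (symmDiff (rW Δ pos χ 2 (w₁ * w0)) (rW Δ pos χ 2 (w₂ * w0))).ncard
        = ((fun x : V => -(w0 x)) ''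
            symmDiff (rW Δ pos χ 2 (w₁ * w0)) (rW Δ pos χ 2 (w₂ * w0))).ncard :=
          (Set.ncard_image_of_injective _ hg).symm
      _ = _ := by rw [himg, hsd]
  -- second term
  have h0card : (symmDiff (rW Δ pos χ 0 (w₁ * w0)) (rW Δ pos χ 0 (w₂ * w0))).ncard
      = (symmDiff (rW Δ pos χ 0 w₁) (rW Δ pos χ 0 w₂)).ncard := by
    have hg0 : Function.Injective (fun x : V => w0 x) := w0.injective
    have himg : (fun x : V => w0 x) '' symmDiff (rW Δ pos χ 0 (w₁ * w0)) (rW Δ pos χ 0 (w₂ * w0))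
        = symmDiff ((fun x : V => w0 x) '' rW Δ pos χ 0 (w₁ * w0))
            ((fun x : V => w0 x) '' rW Δ pos χ 0 (w₂ * w0)) := by
      simp only [Set.symmDiff_def, Set.image_union, Set.image_diff hg0]
    calc (symmDiff (rW Δ pos χ 0 (w₁ * w0)) (rW Δ pos χ 0 (w₂ * w0))).ncard
        = ((fun x : V => w0 x) ''
            symmDiff (rW Δ pos χ 0 (w₁ * w0)) (rW Δ pos χ 0 (w₂ * w0))).ncard :=
          (Set.ncard_image_of_injective _ hg0).symm
      _ = _ := by rw [himg, key0 w₁, key0 w₂]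
  unfold tau
  rw [h2card, h0card]
end
end

section
/- Set c = #r₂(Δ) − #r₀(Δ). Then for all w₁, w₂ ∈ W one has τ(w₁, w₂) + τ(w₀ w₁, w₂) = c; in particular this sum is independent of w₁ and w₂. -/
open scoped InnerProductSpace

noncomputable section

section Aux

variable {V : Type*} [NormedAddCommGroup V] [InnerProductSpace ℝ V]

lemma symmDiff_diff_left_eq {S A B : Set V} (hA : A ⊆ S) (hB : B ⊆ S) :
    symmDiff (S \ A) B = S \ symmDiff A B := by
  ext x
  have hA' := @hA x
  have hB' := @hB x
  simp only [Set.symmDiff_def, Set.mem_union, Set.mem_diff] at *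
  tauto

lemma ncard_symmDiff_compl {S A B : Set V} (hS : S.Finite) (hA : A ⊆ S) (hB : B ⊆ S) :
    ((symmDiff (S \ A) B).ncard : ℤ) = (S.ncard : ℤ) - ((symmDiff A B).ncard : ℤ) := by
  rw [symmDiff_diff_left_eq hA hB]
  have hsub : symmDiff A B ⊆ S := by
    intro x hx
    rcases hx with h | h
    · exact hA h.1
    · exact hB h.1
  rw [Set.ncard_diff hsub (hS.subset hsub)]
  have := Set.ncard_le_ncard hsub hS
  omega

end Aux


/-- `r_n(Δ) = {α ∈ Δ : ⟨α, χ⟩ = n}`. -/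
def rAll {V : Type*} [NormedAddCommGroup V] [InnerProductSpace ℝ V]
    (Δ : Finset V) (χ : V) (n : ℤ) : Set V :=
  {α : V | α ∈ Δ ∧ ⟪α, χ⟫_ℝ = (n : ℝ)}

section Aux2

variable {V : Type*} [NormedAddCommGroup V] [InnerProductSpace ℝ V] [FiniteDimensional ℝ V]

lemma sRefl_inv (α : V) : (sRefl α)⁻¹ = sRefl α := by
  ext v
  show (sRefl α).symm v = sRefl α v
  rw [sRefl, Submodule.reflection_symm]

lemma weylMapsΔ (Δ : Finset V)
    (hrefl : ∀ α ∈ Δ, ∀ β ∈ Δ, sRefl α β ∈ Δ)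
    (W : Subgroup (V ≃ₗᵢ[ℝ] V))
    (hW : W = Subgroup.closure {e : V ≃ₗᵢ[ℝ] V | ∃ α ∈ Δ, e = sRefl α}) :
    ∀ w ∈ W, (∀ α ∈ Δ, w α ∈ Δ) ∧ (∀ α ∈ Δ, w⁻¹ α ∈ Δ) := by
  intro w hw
  rw [hW] at hw
  induction hw using Subgroup.closure_induction with
  | mem x hx =>
    obtain ⟨α, hα, rfl⟩ := hx
    exact ⟨fun β hβ => hrefl α hα β hβ, fun β hβ => by
      rw [sRefl_inv]; exact hrefl α hα β hβ⟩
  | one => simpa using ⟨fun α hα => hα, fun α hα => hα⟩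
  | mul x y hx hy ihx ihy =>
    refine ⟨fun α hα => ?_, fun α hα => ?_⟩
    · have : (x * y) α = x (y α) := rfl
      rw [this]; exact ihx.1 _ (ihy.1 _ hα)
    · have : (x * y)⁻¹ α = y⁻¹ (x⁻¹ α) := by
        rw [mul_inv_rev]; rfl
      rw [this]; exact ihy.2 _ (ihx.2 _ hα)
  | inv x hx ih =>
    refine ⟨ih.2, fun α hα => ?_⟩
    rw [inv_inv]; exact ih.1 _ hα

end Aux2

theorem stmt6
    {V : Type*} [NormedAddCommGroup V] [InnerProductSpace ℝ V] [FiniteDimensional ℝ V]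
    (Δ pos Pi : Finset V) (χ : V)
    -- root system axioms: finite (a `Finset`), spanning, reduced, crystallographic,
    -- stable under negation and under the reflections `s_α`
    (hspan : Submodule.span ℝ (Δ : Set V) = ⊤)
    (hzero : (0 : V) ∉ Δ)
    (hsym : ∀ α ∈ Δ, -α ∈ Δ)
    (hred : ∀ α ∈ Δ, ∀ t : ℝ, t • α ∈ Δ → t = 1 ∨ t = -1)
    (hcrys : ∀ α ∈ Δ, ∀ β ∈ Δ, ∃ n : ℤ, 2 * ⟪β, α⟫_ℝ / ⟪α, α⟫_ℝ = (n : ℝ))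
    (hrefl : ∀ α ∈ Δ, ∀ β ∈ Δ, sRefl α β ∈ Δ)
    -- positive roots and simple roots
    (hposΔ : pos ⊆ Δ)
    (hpart : ∀ α ∈ Δ, (α ∈ pos ↔ -α ∉ pos))
    (hPipos : Pi ⊆ pos)
    (hindep : LinearIndependent ℝ (fun β : (Pi : Set V) => (β : V)))
    (hcomb : ∀ α ∈ pos, ∃ c : V → ℕ, α = ∑ β ∈ Pi, (c β : ℝ) • β)
    -- the Weyl group, generated by the reflections in the roots
    (W : Subgroup (V ≃ₗᵢ[ℝ] V))
    (hW : W = Subgroup.closure {e : V ≃ₗᵢ[ℝ] V | ∃ α ∈ Δ, e = sRefl α})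
    -- the longest element `w₀`, with `w₀ (Δ⁺) = −Δ⁺`
    (w0 : V ≃ₗᵢ[ℝ] V) (hw0W : w0 ∈ W)
    (hw0pos : (fun x => w0 x) '' (pos : Set V) = (fun x => -x) '' (pos : Set V))
    -- `c = #r₂(Δ) − #r₀(Δ)`
    (c : ℤ) (hc : c = ((rAll Δ χ 2).ncard : ℤ) - ((rAll Δ χ 0).ncard : ℤ)) :
    ∀ w₁ : V ≃ₗᵢ[ℝ] V, w₁ ∈ W → ∀ w₂ : V ≃ₗᵢ[ℝ] V, w₂ ∈ W →
      tau Δ pos χ w₁ w₂ + tau Δ pos χ (w0 * w₁) w₂ = c := by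
  -- w0 flips positivity on roots
  intro w₁ hw₁ w₂ hw₂
  have hmaps := weylMapsΔ Δ hrefl W hW
  have hw0maps := hmaps w0 hw0W
  have hflip : ∀ β ∈ Δ, (w0 β ∈ pos ↔ β ∉ pos) := by
    intro β hβ
    constructor
    · intro h hβpos
      -- w0 β ∈ -pos, contradiction with hpart
      have : w0 β ∈ (fun x => -x) '' (pos : Set V) := by
        rw [← hw0pos]; exact ⟨β, hβpos, rfl⟩
      obtain ⟨γ, hγ, hγe⟩ := this
      have hγΔ : γ ∈ Δ := hposΔ hγ
      have hnγ := (hpart γ hγΔ).mp hγ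
      have hγe' : -γ = w0 β := hγe
      rw [← hγe'] at h
      exact hnγ h
    · intro h
      have hmβ : -β ∈ pos := by
        by_contra h'
        exact h ((hpart β hβ).mpr h')
      have : w0 (-β) ∈ (fun x => -x) '' (pos : Set V) := by
        rw [← hw0pos]; exact ⟨-β, hmβ, rfl⟩
      obtain ⟨γ, hγ, hγe⟩ := this
      have : w0 β = γ := by
        have : w0 (-β) = -(w0 β) := by
          simpa using (w0.toLinearIsometry.toLinearMap.map_neg β)
        rw [this] at hγe
        exact (neg_injective hγe).symm
      rw [this]; exact hγ
  -- key: rW of w0 * w is the complement of rW of w inside rAll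
  have hkey : ∀ n : ℤ, ∀ w : V ≃ₗᵢ[ℝ] V, w ∈ W →
      rW Δ pos χ n (w0 * w) = rAll Δ χ n \ rW Δ pos χ n w := by
    intro n w hw
    ext α
    simp only [rW, rAll, Set.mem_setOf_eq, Set.mem_diff]
    constructor
    · rintro ⟨hαΔ, hαχ, hpos⟩
      have hwα : w α ∈ Δ := (hmaps w hw).1 α hαΔ
      have : (w0 * w) α = w0 (w α) := rfl
      rw [this] at hpos
      exact ⟨⟨hαΔ, hαχ⟩, fun h => (hflip _ hwα).mp hpos h.2.2⟩
    · rintro ⟨⟨hαΔ, hαχ⟩, hnot⟩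
      refine ⟨hαΔ, hαχ, ?_⟩
      have hwα : w α ∈ Δ := (hmaps w hw).1 α hαΔ
      have : (w0 * w) α = w0 (w α) := rfl
      rw [this]
      exact (hflip _ hwα).mpr (fun h => hnot ⟨hαΔ, hαχ, h⟩)
  have hfin : ∀ n : ℤ, (rAll Δ χ n).Finite := by
    intro n
    exact Δ.finite_toSet.subset (fun x hx => hx.1)
  have hsub : ∀ n : ℤ, ∀ w : V ≃ₗᵢ[ℝ] V, rW Δ pos χ n w ⊆ rAll Δ χ n := by
    intro n w x hx; exact ⟨hx.1, hx.2.1⟩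
  have hcount : ∀ n : ℤ,
      ((symmDiff (rW Δ pos χ n (w0 * w₁)) (rW Δ pos χ n w₂)).ncard : ℤ)
        = ((rAll Δ χ n).ncard : ℤ)
          - ((symmDiff (rW Δ pos χ n w₁) (rW Δ pos χ n w₂)).ncard : ℤ) := by
    intro n
    rw [hkey n w₁ hw₁]
    exact ncard_symmDiff_compl (hfin n) (hsub n w₁) (hsub n w₂)
  simp only [tau, hcount 2, hcount 0, hc]
  ring
end
end

section
/- Let χ = 2ρ̌. For any subsets Π_{M₁}, Π_{M₂} ⊆ Π, one has τ(w₀(M₁), w₀(M₂)) = #(Π_{M₁} ∨ Π_{M₂}), the cardinality of the symmetric difference. In particular τ(w₀(M), 1) = #Π_M and τ(w₀(M), w₀) = #Π − #Π_M. -/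
open scoped InnerProductSpace

noncomputable section

lemma aux_sRefl_apply {V : Type*} [NormedAddCommGroup V] [InnerProductSpace ℝ V]
    [FiniteDimensional ℝ V] (α x : V) :
    sRefl α x = x - (2 * ⟪α, x⟫_ℝ / ⟪α, α⟫_ℝ) • α := by
  rw [sRefl, Submodule.reflection_orthogonal_apply, Submodule.reflection_apply, Submodule.starProjection_singleton,
    real_inner_self_eq_norm_sq]
  rw [two_smul, neg_sub]
  congr 1
  rw [← add_smul]
  simp only [RCLike.ofReal_real_eq_id, id_eq]
  congr 1
  ring

lemma aux_sRefl_self {V : Type*} [NormedAddCommGroup V] [InnerProductSpace ℝ V]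
    [FiniteDimensional ℝ V] (α : V) : sRefl α α = -α :=
  Submodule.reflection_orthogonalComplement_singleton_eq_neg α

lemma aux_sRefl_invol {V : Type*} [NormedAddCommGroup V] [InnerProductSpace ℝ V]
    [FiniteDimensional ℝ V] (α x : V) : sRefl α (sRefl α x) = x :=
  Submodule.reflection_reflection _ x

lemma aux_sRefl_symm {V : Type*} [NormedAddCommGroup V] [InnerProductSpace ℝ V]
    [FiniteDimensional ℝ V] (α : V) : (sRefl α)⁻¹ = sRefl α := by
  ext x
  simp only [LinearIsometryEquiv.coe_inv, sRefl, Submodule.reflection_symm]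

lemma aux_sRefl_inner {V : Type*} [NormedAddCommGroup V] [InnerProductSpace ℝ V]
    [FiniteDimensional ℝ V] (α x y : V) : ⟪sRefl α x, sRefl α y⟫_ℝ = ⟪x, y⟫_ℝ :=
  (sRefl α).inner_map_map x y

theorem stmt9
    {V : Type*} [NormedAddCommGroup V] [InnerProductSpace ℝ V] [FiniteDimensional ℝ V]
    (Δ pos Pi : Finset V) (χ : V)
    -- root system axioms: finite (a `Finset`), spanning, reduced, crystallographic,
    -- stable under negation and under the reflections `s_α`
    (hspan : Submodule.span ℝ (Δ : Set V) = ⊤)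
    (hzero : (0 : V) ∉ Δ)
    (hsym : ∀ α ∈ Δ, -α ∈ Δ)
    (hred : ∀ α ∈ Δ, ∀ t : ℝ, t • α ∈ Δ → t = 1 ∨ t = -1)
    (hcrys : ∀ α ∈ Δ, ∀ β ∈ Δ, ∃ n : ℤ, 2 * ⟪β, α⟫_ℝ / ⟪α, α⟫_ℝ = (n : ℝ))
    (hrefl : ∀ α ∈ Δ, ∀ β ∈ Δ, sRefl α β ∈ Δ)
    -- positive roots and simple roots
    (hposΔ : pos ⊆ Δ)
    (hpart : ∀ α ∈ Δ, (α ∈ pos ↔ -α ∉ pos))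
    (hPipos : Pi ⊆ pos)
    (hindep : LinearIndependent ℝ (fun β : (Pi : Set V) => (β : V)))
    (hcomb : ∀ α ∈ pos, ∃ c : V → ℕ, α = ∑ β ∈ Pi, (c β : ℝ) • β)
    -- the Weyl group, generated by the reflections in the roots
    (W : Subgroup (V ≃ₗᵢ[ℝ] V))
    (hW : W = Subgroup.closure {e : V ≃ₗᵢ[ℝ] V | ∃ α ∈ Δ, e = sRefl α})
    -- the longest element `w₀`, with `w₀ (Δ⁺) = −Δ⁺`
    (w0 : V ≃ₗᵢ[ℝ] V) (hw0W : w0 ∈ W)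
    (hw0pos : (fun x => w0 x) '' (pos : Set V) = (fun x => -x) '' (pos : Set V))
    -- `χ = 2ρ̌` is the sum of the positive coroots `β̌ = 2β/(β,β)`
    (hchi : χ = ∑ β ∈ pos, ((2 : ℝ) / ⟪β, β⟫_ℝ) • β)
    -- for each `Π_M ⊆ Π`, `w₀(M)` is the element of the subgroup `W_M` generated by
    -- the reflections in `Π_M` mapping every positive root in `Δ ∩ span Π_M` to a
    -- negative root
    (w0M : Finset V → (V ≃ₗᵢ[ℝ] V))
    (hw0MW : ∀ M, M ⊆ Pi →
      w0M M ∈ Subgroup.closure {e : V ≃ₗᵢ[ℝ] V | ∃ α ∈ M, e = sRefl α})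
    (hw0Mneg : ∀ M, M ⊆ Pi → ∀ α ∈ Δ,
      α ∈ Submodule.span ℝ (M : Set V) → α ∈ pos → -(w0M M α) ∈ pos) :
    ∀ M₁, M₁ ⊆ Pi → ∀ M₂, M₂ ⊆ Pi →
      tau Δ pos χ (w0M M₁) (w0M M₂)
        = ((symmDiff (M₁ : Set V) (M₂ : Set V)).ncard : ℤ) ∧
      tau Δ pos χ (w0M M₁) 1 = (M₁.card : ℤ) ∧
      tau Δ pos χ (w0M M₁) w0 = (Pi.card : ℤ) - (M₁.card : ℤ) := by
  classical
  intro M₁ hM₁ M₂ hM₂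
  have hPiΔ : ∀ β ∈ Pi, β ∈ Δ := fun β hβ => hposΔ (hPipos hβ)
  have hnegpos : ∀ α ∈ Δ, α ∉ pos → -α ∈ pos := by
    intro α hα h
    by_contra h2
    exact h ((hpart α hα).mpr h2)
  -- zero-coefficient lemma
  have hg0 : ∀ g : V → ℝ, ∑ β ∈ Pi, g β • β = 0 → ∀ β ∈ Pi, g β = 0 := by
    intro g hsum β hβ
    have h := linearIndependent_iff'.mp hindep Pi.attach (fun i => g i) ?_ ⟨β, hβ⟩
      (Finset.mem_attach _ _)
    · exact h
    · rw [← hsum]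
      exact Finset.sum_attach Pi (fun x => g x • x)
  -- reflections in simple roots permute the other positive roots
  have hperm : ∀ β ∈ Pi, ∀ γ ∈ pos, γ ≠ β → sRefl β γ ∈ pos ∧ sRefl β γ ≠ β := by
    intro β hβ γ hγ hne
    have hβΔ := hPiΔ β hβ
    have hγΔ := hposΔ hγ
    have hsΔ : sRefl β γ ∈ Δ := hrefl β hβΔ γ hγΔ
    have hsne : sRefl β γ ≠ β := by
      intro h
      have h2 : γ = sRefl β β := by rw [← aux_sRefl_invol β γ, h]
      rw [aux_sRefl_self] at h2
      have hng : -γ ∈ pos := by rw [h2, neg_neg]; exact hPipos hβ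
      exact (hpart γ hγΔ).mp hγ hng
    refine ⟨?_, hsne⟩
    by_contra hnp
    have hneg : -(sRefl β γ) ∈ pos := hnegpos _ hsΔ hnp
    obtain ⟨c, hc⟩ := hcomb γ hγ
    obtain ⟨d, hd⟩ := hcomb _ hneg
    set t : ℝ := 2 * ⟪β, γ⟫_ℝ / ⟪β, β⟫_ℝ with ht
    have hs : sRefl β γ = γ - t • β := aux_sRefl_apply β γ
    have h1 : ∑ δ ∈ Pi, (if δ = β then t else 0) • δ = t • β := by
      rw [Finset.sum_eq_single_of_mem β hβ]
      · rw [if_pos rfl]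
      · intro δ _ hδβ
        rw [if_neg hδβ, zero_smul]
    have htot : ∑ δ ∈ Pi, (((c δ : ℝ) + (d δ : ℝ)) - (if δ = β then t else 0)) • δ = 0 := by
      simp only [sub_smul, add_smul, Finset.sum_sub_distrib, Finset.sum_add_distrib, h1]
      rw [← hc, ← hd, hs]
      abel
    have hzero' := hg0 _ htot
    have hczero : ∀ δ ∈ Pi, δ ≠ β → (c δ : ℝ) = 0 := by
      intro δ hδ hδβ
      have h0 := hzero' δ hδ
      rw [if_neg hδβ, sub_zero] at h0
      have hc0 : (0:ℝ) ≤ (c δ : ℝ) := Nat.cast_nonneg _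
      have hd0 : (0:ℝ) ≤ (d δ : ℝ) := Nat.cast_nonneg _
      linarith
    have hγβ : γ = (c β : ℝ) • β := by
      rw [hc, ← Finset.add_sum_erase _ _ hβ, Finset.sum_eq_zero, add_zero]
      intro δ hδ
      rw [hczero δ (Finset.mem_of_mem_erase hδ) (Finset.ne_of_mem_erase hδ), zero_smul]
    have hred' := hred β hβΔ (c β) (by rw [← hγβ]; exact hγΔ)
    rcases hred' with h1' | h1'
    · exact hne (by rw [hγβ, h1', one_smul])
    · have hc0 : (0:ℝ) ≤ (c β : ℝ) := Nat.cast_nonneg _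
      rw [h1'] at hc0
      linarith
  -- pairing with χ of simple roots is 2
  have hchi2 : ∀ β ∈ Pi, ⟪β, χ⟫_ℝ = 2 := by
    intro β hβ
    have hβΔ := hPiΔ β hβ
    have hβ0 : β ≠ 0 := fun h => hzero (h ▸ hβΔ)
    have hββ : ⟪β, β⟫_ℝ ≠ 0 := by
      rw [real_inner_self_eq_norm_sq]
      exact pow_ne_zero 2 (norm_ne_zero_iff.mpr hβ0)
    have hβpos := hPipos hβ
    rw [hchi, inner_sum]
    simp only [real_inner_smul_right]
    rw [← Finset.add_sum_erase _ _ hβpos]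
    have h0 : ∑ γ ∈ pos.erase β, (2 / ⟪γ, γ⟫_ℝ) * ⟪β, γ⟫_ℝ = 0 := by
      apply Finset.sum_involution (g := fun γ _ => sRefl β γ)
      · intro γ hγ
        have hγp := Finset.mem_of_mem_erase hγ
        have hγβ := Finset.ne_of_mem_erase hγ
        have e1 : ⟪sRefl β γ, sRefl β γ⟫_ℝ = ⟪γ, γ⟫_ℝ := aux_sRefl_inner β γ γ
        have e2 : ⟪β, sRefl β γ⟫_ℝ = -⟪β, γ⟫_ℝ := by
          calc ⟪β, sRefl β γ⟫_ℝ = ⟪sRefl β β, sRefl β (sRefl β γ)⟫_ℝ :=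
                (aux_sRefl_inner β β (sRefl β γ)).symm
          _ = ⟪-β, γ⟫_ℝ := by rw [aux_sRefl_self, aux_sRefl_invol]
          _ = -⟪β, γ⟫_ℝ := by rw [inner_neg_left]
        rw [e1, e2]
        ring
      · intro γ hγ hfne hgg
        have hγp := Finset.mem_of_mem_erase hγ
        have hγβ := Finset.ne_of_mem_erase hγ
        have e2 : ⟪β, sRefl β γ⟫_ℝ = -⟪β, γ⟫_ℝ := by
          calc ⟪β, sRefl β γ⟫_ℝ = ⟪sRefl β β, sRefl β (sRefl β γ)⟫_ℝ :=
                (aux_sRefl_inner β β (sRefl β γ)).symm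
          _ = ⟪-β, γ⟫_ℝ := by rw [aux_sRefl_self, aux_sRefl_invol]
          _ = -⟪β, γ⟫_ℝ := by rw [inner_neg_left]
        rw [hgg] at e2
        apply hfne
        have : ⟪β, γ⟫_ℝ = 0 := by linarith
        rw [this, mul_zero]
      · intro γ hγ
        have hγp := Finset.mem_of_mem_erase hγ
        have hγβ := Finset.ne_of_mem_erase hγ
        obtain ⟨hsp, hsne⟩ := hperm β hβ γ hγp hγβ
        exact Finset.mem_erase.mpr ⟨hsne, hsp⟩
      · intro γ hγ
        exact aux_sRefl_invol β γ
    rw [h0, add_zero, div_mul_cancel₀]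
    exact hββ
  -- heights
  have hheight : ∀ α ∈ pos, 0 < ⟪α, χ⟫_ℝ ∧ (⟪α, χ⟫_ℝ = 2 → α ∈ Pi) := by
    intro α hα
    obtain ⟨c, hc⟩ := hcomb α hα
    have hval : ⟪α, χ⟫_ℝ = 2 * ((∑ β ∈ Pi, c β : ℕ) : ℝ) := by
      rw [hc, sum_inner]
      push_cast
      rw [Finset.mul_sum]
      apply Finset.sum_congr rfl
      intro β hβ
      rw [real_inner_smul_left, hchi2 β hβ]
      ring
    set N := ∑ β ∈ Pi, c β with hNdef
    have hN : N ≠ 0 := by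
      intro h
      have hcz : ∀ β ∈ Pi, c β = 0 := by rwa [Finset.sum_eq_zero_iff] at h
      have hα0 : α = 0 := by
        rw [hc]
        apply Finset.sum_eq_zero
        intro β hβ
        rw [hcz β hβ]
        simp
      exact hzero (hα0 ▸ hposΔ hα)
    constructor
    · rw [hval]
      have h1 : (1:ℝ) ≤ (N:ℝ) := by exact_mod_cast Nat.one_le_iff_ne_zero.mpr hN
      linarith
    · intro h2
      rw [hval] at h2
      have hN1 : N = 1 := by
        have : (N:ℝ) = 1 := by linarith
        exact_mod_cast this
      obtain ⟨β₀, hβ₀, hcβ₀⟩ : ∃ β₀ ∈ Pi, c β₀ ≠ 0 := by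
        by_contra hcon
        push_neg at hcon
        exact hN (Finset.sum_eq_zero hcon)
      have hsplit : c β₀ + ∑ δ ∈ Pi.erase β₀, c δ = 1 := by
        rw [Finset.add_sum_erase _ _ hβ₀]
        exact hN1
      have h1 : c β₀ = 1 := by omega
      have hrest : ∑ δ ∈ Pi.erase β₀, c δ = 0 := by omega
      have hrz : ∀ δ ∈ Pi.erase β₀, c δ = 0 := by rwa [Finset.sum_eq_zero_iff] at hrest
      have hαβ : α = β₀ := by
        rw [hc, ← Finset.add_sum_erase _ _ hβ₀, h1, Finset.sum_eq_zero, add_zero]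
        · simp
        · intro δ hδ
          rw [hrz δ hδ]
          simp
      rwa [hαβ]
  have hr0 : ∀ w : V ≃ₗᵢ[ℝ] V, rW Δ pos χ 0 w = ∅ := by
    intro w
    ext α
    simp only [rW, Set.mem_setOf_eq, Set.mem_empty_iff_false, iff_false, not_and]
    intro hαΔ h0
    exfalso
    norm_num at h0
    by_cases hp : α ∈ pos
    · have := (hheight α hp).1
      rw [h0] at this
      linarith
    · have hneg := hnegpos α hαΔ hp
      have := (hheight _ hneg).1
      rw [inner_neg_left, h0] at this
      linarith
  have hr2 : ∀ w : V ≃ₗᵢ[ℝ] V, rW Δ pos χ 2 w = {α | α ∈ Pi ∧ w α ∈ pos} := by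
    intro w
    ext α
    simp only [rW, Set.mem_setOf_eq]
    constructor
    · rintro ⟨hαΔ, h2, hw⟩
      norm_num at h2
      refine ⟨?_, hw⟩
      by_cases hp : α ∈ pos
      · exact (hheight α hp).2 h2
      · exfalso
        have hneg := hnegpos α hαΔ hp
        have := (hheight _ hneg).1
        rw [inner_neg_left, h2] at this
        linarith
    · rintro ⟨hPi', hw⟩
      refine ⟨hPiΔ α hPi', ?_, hw⟩
      rw [hchi2 α hPi']
      norm_num
  -- stability of Δ and translation property for elements of W_M
  have hWM : ∀ M, M ⊆ Pi → (∀ α ∈ Δ, w0M M α ∈ Δ) ∧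
      (∀ x : V, w0M M x - x ∈ Submodule.span ℝ (M : Set V)) := by
    intro M hM
    have key : ∀ e ∈ Subgroup.closure {e : V ≃ₗᵢ[ℝ] V | ∃ α ∈ M, e = sRefl α},
        ((∀ α ∈ Δ, e α ∈ Δ) ∧ ∀ x : V, e x - x ∈ Submodule.span ℝ (M : Set V)) ∧
        ((∀ α ∈ Δ, e⁻¹ α ∈ Δ) ∧ ∀ x : V, e⁻¹ x - x ∈ Submodule.span ℝ (M : Set V)) := by
      intro e he
      induction he using Subgroup.closure_induction with
      | mem x hx =>
        obtain ⟨α, hα, rfl⟩ := hx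
        have hbase : (∀ β ∈ Δ, sRefl α β ∈ Δ) ∧
            ∀ x : V, sRefl α x - x ∈ Submodule.span ℝ (M : Set V) := by
          constructor
          · exact fun β hβ => hrefl α (hPiΔ α (hM hα)) β hβ
          · intro x
            rw [aux_sRefl_apply, sub_sub_cancel_left]
            exact Submodule.neg_mem _ (Submodule.smul_mem _ _
              (Submodule.subset_span (Finset.mem_coe.mpr hα)))
        exact ⟨hbase, by rw [aux_sRefl_symm]; exact hbase⟩
      | one =>
        refine ⟨⟨fun α hα => ?_, fun x => ?_⟩, ?_⟩
        · simpa using hα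
        · simp only [LinearIsometryEquiv.coe_one, id_eq, sub_self]
          exact Submodule.zero_mem _
        · rw [inv_one]
          refine ⟨fun α hα => by simpa using hα, fun x => ?_⟩
          simp only [LinearIsometryEquiv.coe_one, id_eq, sub_self]
          exact Submodule.zero_mem _
      | mul x y hx hy px py =>
        obtain ⟨⟨px1, px2⟩, ⟨px1', px2'⟩⟩ := px
        obtain ⟨⟨py1, py2⟩, ⟨py1', py2'⟩⟩ := py
        constructor
        · refine ⟨fun α hα => ?_, fun z => ?_⟩
          · simp only [LinearIsometryEquiv.coe_mul, Function.comp_apply]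
            exact px1 _ (py1 α hα)
          · have heq : (x*y) z - z = (x (y z) - y z) + (y z - z) := by
              simp only [LinearIsometryEquiv.coe_mul, Function.comp_apply]
              abel
            rw [heq]
            exact Submodule.add_mem _ (px2 _) (py2 _)
        · rw [mul_inv_rev]
          refine ⟨fun α hα => ?_, fun z => ?_⟩
          · simp only [LinearIsometryEquiv.coe_mul, Function.comp_apply]
            exact py1' _ (px1' α hα)
          · have heq : (y⁻¹*x⁻¹) z - z = (y⁻¹ (x⁻¹ z) - x⁻¹ z) + (x⁻¹ z - z) := by
              simp only [LinearIsometryEquiv.coe_mul, Function.comp_apply]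
              abel
            rw [heq]
            exact Submodule.add_mem _ (py2' _) (px2' _)
      | inv x hx px =>
        refine ⟨px.2, ?_⟩
        rw [inv_inv]
        exact px.1
    exact (key _ (hw0MW M hM)).1
  have hr2w0M : ∀ M, M ⊆ Pi → rW Δ pos χ 2 (w0M M) = ↑(Pi \ M) := by
    intro M hM
    rw [hr2]
    ext α
    simp only [Set.mem_setOf_eq, Finset.coe_sdiff, Set.mem_diff, Finset.mem_coe,
      Finset.mem_sdiff]
    constructor
    · rintro ⟨hPi', hwpos⟩
      refine ⟨hPi', fun hαM => ?_⟩
      have hαΔ := hPiΔ α hPi'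
      have hneg := hw0Mneg M hM α hαΔ (Submodule.subset_span (Finset.mem_coe.mpr hαM))
        (hPipos hPi')
      exact (hpart _ ((hWM M hM).1 α hαΔ)).mp hwpos hneg
    · rintro ⟨hPi', hαM⟩
      refine ⟨hPi', ?_⟩
      by_contra hnp
      have hyΔ : w0M M α ∈ Δ := (hWM M hM).1 α (hPiΔ α hPi')
      have hneg : -(w0M M α) ∈ pos := hnegpos _ hyΔ hnp
      obtain ⟨d, hd⟩ := hcomb _ hneg
      obtain ⟨f, -, hf⟩ := Submodule.mem_span_finset.mp ((hWM M hM).2 α)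
      have hsum1 : ∑ δ ∈ Pi, (if δ = α then (1:ℝ) else 0) • δ = α := by
        rw [Finset.sum_eq_single_of_mem α hPi']
        · rw [if_pos rfl, one_smul]
        · intro δ _ hδα
          rw [if_neg hδα, zero_smul]
      have hsum2 : ∑ δ ∈ Pi, (if δ ∈ M then f δ else 0) • δ = w0M M α - α := by
        rw [← hf, ← Finset.sum_subset hM]
        · apply Finset.sum_congr rfl
          intro δ hδ
          rw [if_pos hδ]
        · intro δ _ hδM
          rw [if_neg hδM, zero_smul]
      have htot : ∑ δ ∈ Pi,
          ((if δ = α then (1:ℝ) else 0) + (if δ ∈ M then f δ else 0) + (d δ : ℝ)) • δ = 0 := by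
        simp only [add_smul, Finset.sum_add_distrib, hsum1, hsum2, ← hd]
        abel
      have hga := hg0 _ htot α hPi'
      rw [if_pos rfl, if_neg hαM] at hga
      have hd0 : (0:ℝ) ≤ (d α : ℝ) := Nat.cast_nonneg _
      linarith
  have hr2one : rW Δ pos χ 2 1 = ↑Pi := by
    rw [hr2]
    ext α
    simp only [Set.mem_setOf_eq, LinearIsometryEquiv.coe_one, id_eq, Finset.mem_coe]
    exact ⟨fun h => h.1, fun h => ⟨h, hPipos h⟩⟩
  have hr2w0 : rW Δ pos χ 2 w0 = (∅ : Set V) := by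
    rw [hr2]
    ext α
    simp only [Set.mem_setOf_eq, Set.mem_empty_iff_false, iff_false, not_and]
    intro hPi' hwpos
    have himg : w0 α ∈ (fun x => -x) '' (pos : Set V) := by
      rw [← hw0pos]
      exact Set.mem_image_of_mem _ (Finset.mem_coe.mpr (hPipos hPi'))
    obtain ⟨p, hp, hpe⟩ := himg
    have hpe' : -p = w0 α := hpe
    have hpΔ : -p ∈ Δ := hsym p (hposΔ (Finset.mem_coe.mp hp))
    rw [hpe'] at hpΔ
    exact (hpart _ hpΔ).mp hwpos (by rw [← hpe', neg_neg]; exact hp)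
  have hz : ((symmDiff (rW Δ pos χ 0 (w0M M₁)) (rW Δ pos χ 0 (w0M M₂))).ncard : ℤ) = 0 ∧
      ((symmDiff (rW Δ pos χ 0 (w0M M₁)) (rW Δ pos χ 0 1)).ncard : ℤ) = 0 ∧
      ((symmDiff (rW Δ pos χ 0 (w0M M₁)) (rW Δ pos χ 0 w0)).ncard : ℤ) = 0 := by
    refine ⟨?_, ?_, ?_⟩ <;> rw [hr0, hr0] <;> simp
  refine ⟨?_, ?_, ?_⟩
  · rw [tau, hz.1, sub_zero, hr2w0M M₁ hM₁, hr2w0M M₂ hM₂, ← Finset.coe_symmDiff,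
      ← Finset.coe_symmDiff, Set.ncard_coe_finset, Set.ncard_coe_finset]
    congr 1
    have : symmDiff (Pi \ M₁) (Pi \ M₂) = symmDiff M₁ M₂ := by
      ext x
      have h1 : x ∈ M₁ → x ∈ Pi := fun h => hM₁ h
      have h2 : x ∈ M₂ → x ∈ Pi := fun h => hM₂ h
      simp only [Finset.mem_symmDiff, Finset.mem_sdiff]
      tauto
    rw [this]
  · rw [tau, hz.2.1, sub_zero, hr2w0M M₁ hM₁, hr2one, ← Finset.coe_symmDiff,
      Set.ncard_coe_finset]
    congr 1
    have : symmDiff (Pi \ M₁) Pi = M₁ := by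
      ext x
      have h1 : x ∈ M₁ → x ∈ Pi := fun h => hM₁ h
      simp only [Finset.mem_symmDiff, Finset.mem_sdiff]
      tauto
    rw [this]
  · rw [tau, hz.2.2, sub_zero, hr2w0M M₁ hM₁, hr2w0]
    rw [symmDiff_def]
    simp only [Set.diff_empty, Set.empty_diff, Set.sup_eq_union, Set.union_empty,
      Set.ncard_coe_finset]
    rw [Finset.card_sdiff_of_subset hM₁]
    have := Finset.card_le_card hM₁
    omega
end
end

section
/- Let χ = 2ρ̌. For every subset Π_{M'} ⊆ Π one has (w₀ : ξ_{M'}) = (−v)^{|Π|−|Π_{M'}|} · (ξ_{M'} : ξ_{M'}). -/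
open scoped InnerProductSpace

noncomputable section

/-- The symmetric `ℚ(v)`-bilinear form on the free `ℚ(v)`-module `K` with basis `W`,
determined on basis elements by `(w₁ : w₂) = (−v)^{τ(w₁,w₂)}`. -/
def Bform {V : Type*} [NormedAddCommGroup V] [InnerProductSpace ℝ V]
    (Δ pos : Finset V) (χ : V) (W : Subgroup (V ≃ₗᵢ[ℝ] V)) :
    (W →₀ RatFunc ℚ) →ₗ[RatFunc ℚ] (W →₀ RatFunc ℚ) →ₗ[RatFunc ℚ] RatFunc ℚ :=
  Finsupp.linearCombination (RatFunc ℚ) fun w : W =>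
    Finsupp.linearCombination (RatFunc ℚ) fun w' : W =>
      (-(RatFunc.X : RatFunc ℚ)) ^ (tau Δ pos χ (w : V ≃ₗᵢ[ℝ] V) (w' : V ≃ₗᵢ[ℝ] V))

/-- `ξ_{M'} = Σ_{Π_M ⊆ Π_{M'}} v^{|Π_{M'}|−|Π_M|} · w₀(M)` in `K`. -/
def xiElt {V : Type*} [NormedAddCommGroup V] [InnerProductSpace ℝ V]
    (W : Subgroup (V ≃ₗᵢ[ℝ] V)) (w0M : Finset V → W) (M' : Finset V) :
    W →₀ RatFunc ℚ :=
  ∑ M ∈ M'.powerset,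
    Finsupp.single (w0M M) ((RatFunc.X : RatFunc ℚ) ^ (M'.card - M.card))

open Finset in
lemma aux_sum_powerset {R : Type*} [CommRing R] {ι : Type*} [DecidableEq ι] (c : R) (s : Finset ι) :
    ∑ M ∈ s.powerset, c ^ (s.card - M.card) = (1 + c) ^ s.card := by
  have h := Finset.prod_add (fun _ : ι => (1 : R)) (fun _ : ι => c) s
  rw [Finset.prod_const] at h
  rw [h]
  refine Finset.sum_congr rfl fun M hM => ?_
  rw [Finset.prod_const_one, one_mul, Finset.prod_const,
    Finset.card_sdiff_of_subset (Finset.mem_powerset.mp hM)]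

open Finset in
lemma aux_double {R : Type*} [CommRing R] {ι : Type*} [DecidableEq ι] (x : R) (s : Finset ι) :
    ∑ M₁ ∈ s.powerset, ∑ M₂ ∈ s.powerset,
      x ^ (s.card - M₁.card) * (x ^ (s.card - M₂.card) * (-x) ^ (symmDiff M₁ M₂).card)
    = (1 - x ^ 2) ^ s.card := by
  induction s using Finset.induction_on with
  | empty => simp
  | @insert a s ha ih =>
    have hdisj : Disjoint s.powerset (s.powerset.image (insert a)) := by
      rw [Finset.disjoint_left]
      rintro t ht hti
      obtain ⟨u, hu, rfl⟩ := Finset.mem_image.mp hti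
      exact ha (Finset.mem_powerset.mp ht (Finset.mem_insert_self a u))
    have hinj : ∀ t ∈ s.powerset, ∀ u ∈ s.powerset, insert a t = insert a u → t = u := by
      intro t ht u hu h
      have hat : a ∉ t := fun h' => ha (Finset.mem_powerset.mp ht h')
      have hau : a ∉ u := fun h' => ha (Finset.mem_powerset.mp hu h')
      rw [← Finset.erase_insert hat, h, Finset.erase_insert hau]
    have split : ∀ f : Finset ι → R, ∑ M ∈ (insert a s).powerset, f M
        = ∑ M ∈ s.powerset, f M + ∑ M ∈ s.powerset, f (insert a M) := by
      intro f
      rw [Finset.powerset_insert, Finset.sum_union hdisj, Finset.sum_image hinj]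
    have hcard : (insert a s).card = s.card + 1 := Finset.card_insert_of_notMem ha
    have hnotmem : ∀ t ∈ s.powerset, a ∉ t := fun t ht h' => ha (Finset.mem_powerset.mp ht h')
    have hsd1 : ∀ t₁ ∈ s.powerset, ∀ t₂ ∈ s.powerset,
        symmDiff (insert a t₁) t₂ = insert a (symmDiff t₁ t₂) := by
      intro t₁ ht₁ t₂ ht₂
      have h1 := hnotmem t₁ ht₁; have h2 := hnotmem t₂ ht₂
      ext b
      rcases eq_or_ne b a with rfl | hb
      · simp [Finset.mem_symmDiff, h1, h2]
      · simp only [Finset.mem_symmDiff, Finset.mem_insert, hb, false_or]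
    have hsd2 : ∀ t₁ ∈ s.powerset, ∀ t₂ ∈ s.powerset,
        symmDiff t₁ (insert a t₂) = insert a (symmDiff t₁ t₂) := by
      intro t₁ ht₁ t₂ ht₂
      rw [symmDiff_comm, hsd1 t₂ ht₂ t₁ ht₁, symmDiff_comm]
    have hsd3 : ∀ t₁ ∈ s.powerset, ∀ t₂ ∈ s.powerset,
        symmDiff (insert a t₁) (insert a t₂) = symmDiff t₁ t₂ := by
      intro t₁ ht₁ t₂ ht₂
      have h1 := hnotmem t₁ ht₁; have h2 := hnotmem t₂ ht₂
      ext b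
      rcases eq_or_ne b a with rfl | hb
      · simp [Finset.mem_symmDiff, h1, h2]
      · simp only [Finset.mem_symmDiff, Finset.mem_insert, hb, false_or]
    have hsdnm : ∀ t₁ ∈ s.powerset, ∀ t₂ ∈ s.powerset, a ∉ symmDiff t₁ t₂ := by
      intro t₁ ht₁ t₂ ht₂ h
      rw [Finset.mem_symmDiff] at h
      rcases h with ⟨h, _⟩ | ⟨h, _⟩
      · exact hnotmem t₁ ht₁ h
      · exact hnotmem t₂ ht₂ h
    rw [split]
    have e1 : ∀ M₁ ∈ s.powerset, ∀ M₂ ∈ s.powerset,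
        x ^ ((insert a s).card - M₁.card) * (x ^ ((insert a s).card - M₂.card)
          * (-x) ^ (symmDiff M₁ M₂).card)
        = x ^ 2 * (x ^ (s.card - M₁.card) * (x ^ (s.card - M₂.card)
          * (-x) ^ (symmDiff M₁ M₂).card)) := by
      intro M₁ h₁ M₂ h₂
      have k₁ : M₁.card ≤ s.card := Finset.card_le_card (Finset.mem_powerset.mp h₁)
      have k₂ : M₂.card ≤ s.card := Finset.card_le_card (Finset.mem_powerset.mp h₂)
      rw [hcard]
      rw [show s.card + 1 - M₁.card = (s.card - M₁.card) + 1 by omega,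
        show s.card + 1 - M₂.card = (s.card - M₂.card) + 1 by omega, pow_succ, pow_succ]
      ring
    have e2 : ∀ M₁ ∈ s.powerset, ∀ M₂ ∈ s.powerset,
        x ^ ((insert a s).card - M₁.card) * (x ^ ((insert a s).card - (insert a M₂).card)
          * (-x) ^ (symmDiff M₁ (insert a M₂)).card)
        = -x ^ 2 * (x ^ (s.card - M₁.card) * (x ^ (s.card - M₂.card)
          * (-x) ^ (symmDiff M₁ M₂).card)) := by
      intro M₁ h₁ M₂ h₂
      have k₁ : M₁.card ≤ s.card := Finset.card_le_card (Finset.mem_powerset.mp h₁)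
      have k₂ : M₂.card ≤ s.card := Finset.card_le_card (Finset.mem_powerset.mp h₂)
      rw [hcard, hsd2 M₁ h₁ M₂ h₂, Finset.card_insert_of_notMem (hsdnm M₁ h₁ M₂ h₂),
        Finset.card_insert_of_notMem (hnotmem M₂ h₂)]
      rw [show s.card + 1 - M₁.card = (s.card - M₁.card) + 1 by omega,
        show s.card + 1 - (M₂.card + 1) = s.card - M₂.card by omega, pow_succ, pow_succ]
      ring
    have e3 : ∀ M₁ ∈ s.powerset, ∀ M₂ ∈ s.powerset,
        x ^ ((insert a s).card - (insert a M₁).card) * (x ^ ((insert a s).card - M₂.card)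
          * (-x) ^ (symmDiff (insert a M₁) M₂).card)
        = -x ^ 2 * (x ^ (s.card - M₁.card) * (x ^ (s.card - M₂.card)
          * (-x) ^ (symmDiff M₁ M₂).card)) := by
      intro M₁ h₁ M₂ h₂
      have k₁ : M₁.card ≤ s.card := Finset.card_le_card (Finset.mem_powerset.mp h₁)
      have k₂ : M₂.card ≤ s.card := Finset.card_le_card (Finset.mem_powerset.mp h₂)
      rw [hcard, hsd1 M₁ h₁ M₂ h₂, Finset.card_insert_of_notMem (hsdnm M₁ h₁ M₂ h₂),
        Finset.card_insert_of_notMem (hnotmem M₁ h₁)]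
      rw [show s.card + 1 - (M₁.card + 1) = s.card - M₁.card by omega,
        show s.card + 1 - M₂.card = (s.card - M₂.card) + 1 by omega, pow_succ, pow_succ]
      ring
    have e4 : ∀ M₁ ∈ s.powerset, ∀ M₂ ∈ s.powerset,
        x ^ ((insert a s).card - (insert a M₁).card) * (x ^ ((insert a s).card - (insert a M₂).card)
          * (-x) ^ (symmDiff (insert a M₁) (insert a M₂)).card)
        = x ^ (s.card - M₁.card) * (x ^ (s.card - M₂.card) * (-x) ^ (symmDiff M₁ M₂).card) := by
      intro M₁ h₁ M₂ h₂
      rw [hcard, hsd3 M₁ h₁ M₂ h₂, Finset.card_insert_of_notMem (hnotmem M₁ h₁),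
        Finset.card_insert_of_notMem (hnotmem M₂ h₂)]
      rw [show s.card + 1 - (M₁.card + 1) = s.card - M₁.card by omega,
        show s.card + 1 - (M₂.card + 1) = s.card - M₂.card by omega]
    calc ∑ M₁ ∈ s.powerset, (∑ M₂ ∈ (insert a s).powerset,
            x ^ ((insert a s).card - M₁.card) * (x ^ ((insert a s).card - M₂.card)
              * (-x) ^ (symmDiff M₁ M₂).card))
          + ∑ M₁ ∈ s.powerset, (∑ M₂ ∈ (insert a s).powerset,
            x ^ ((insert a s).card - (insert a M₁).card)
              * (x ^ ((insert a s).card - M₂.card) * (-x) ^ (symmDiff (insert a M₁) M₂).card))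
        = (x ^ 2 + -x ^ 2 + (-x ^ 2 + 1)) * ∑ M₁ ∈ s.powerset, ∑ M₂ ∈ s.powerset,
            x ^ (s.card - M₁.card) * (x ^ (s.card - M₂.card) * (-x) ^ (symmDiff M₁ M₂).card) := by
          rw [Finset.mul_sum]
          rw [← Finset.sum_add_distrib]
          refine Finset.sum_congr rfl fun M₁ h₁ => ?_
          rw [split (fun M₂ => x ^ ((insert a s).card - M₁.card)
              * (x ^ ((insert a s).card - M₂.card) * (-x) ^ (symmDiff M₁ M₂).card)),
            split (fun M₂ => x ^ ((insert a s).card - (insert a M₁).card)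
              * (x ^ ((insert a s).card - M₂.card) * (-x) ^ (symmDiff (insert a M₁) M₂).card)),
            ← Finset.sum_add_distrib, ← Finset.sum_add_distrib, ← Finset.sum_add_distrib,
            Finset.mul_sum]
          refine Finset.sum_congr rfl fun M₂ h₂ => ?_
          rw [e1 M₁ h₁ M₂ h₂, e2 M₁ h₁ M₂ h₂, e3 M₁ h₁ M₂ h₂, e4 M₁ h₁ M₂ h₂]
          ring
      _ = (1 - x ^ 2) ^ (insert a s).card := by
          rw [ih, hcard, pow_succ]
          ring

open Finset in
lemma keyAlg {R : Type*} [CommRing R] {ι : Type*} [DecidableEq ι] (x : R)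
    (s : Finset ι) (p : ℕ) (hp : s.card ≤ p) :
    ∑ M ∈ s.powerset, x ^ (s.card - M.card) * (-x) ^ (p - M.card)
    = (-x) ^ (p - s.card) *
      ∑ M₁ ∈ s.powerset, ∑ M₂ ∈ s.powerset,
        x ^ (s.card - M₁.card) * (x ^ (s.card - M₂.card) * (-x) ^ (symmDiff M₁ M₂).card) := by
  rw [aux_double]
  have h : ∀ M ∈ s.powerset, x ^ (s.card - M.card) * (-x) ^ (p - M.card)
      = (-x) ^ (p - s.card) * (x * -x) ^ (s.card - M.card) := by
    intro M hM
    have hk : M.card ≤ s.card := Finset.card_le_card (Finset.mem_powerset.mp hM)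
    rw [show p - M.card = (p - s.card) + (s.card - M.card) by omega, pow_add, mul_pow]
    ring
  rw [Finset.sum_congr rfl h, ← Finset.mul_sum, aux_sum_powerset]
  congr 2
  ring

set_option maxHeartbeats 2000000 in
theorem stmt12
    {V : Type*} [NormedAddCommGroup V] [InnerProductSpace ℝ V] [FiniteDimensional ℝ V]
    (Δ pos Pi : Finset V) (χ : V)
    -- root system axioms: finite (a `Finset`), spanning, reduced, crystallographic,
    -- stable under negation and under the reflections `s_α`
    (hspan : Submodule.span ℝ (Δ : Set V) = ⊤)
    (hzero : (0 : V) ∉ Δ)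
    (hsym : ∀ α ∈ Δ, -α ∈ Δ)
    (hred : ∀ α ∈ Δ, ∀ t : ℝ, t • α ∈ Δ → t = 1 ∨ t = -1)
    (hcrys : ∀ α ∈ Δ, ∀ β ∈ Δ, ∃ n : ℤ, 2 * ⟪β, α⟫_ℝ / ⟪α, α⟫_ℝ = (n : ℝ))
    (hrefl : ∀ α ∈ Δ, ∀ β ∈ Δ, sRefl α β ∈ Δ)
    -- positive roots and simple roots
    (hposΔ : pos ⊆ Δ)
    (hpart : ∀ α ∈ Δ, (α ∈ pos ↔ -α ∉ pos))
    (hPipos : Pi ⊆ pos)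
    (hindep : LinearIndependent ℝ (fun β : (Pi : Set V) => (β : V)))
    (hcomb : ∀ α ∈ pos, ∃ c : V → ℕ, α = ∑ β ∈ Pi, (c β : ℝ) • β)
    -- the Weyl group, generated by the reflections in the roots
    (W : Subgroup (V ≃ₗᵢ[ℝ] V))
    (hW : W = Subgroup.closure {e : V ≃ₗᵢ[ℝ] V | ∃ α ∈ Δ, e = sRefl α})
    -- `χ = 2ρ̌` is the sum of the positive coroots `β̌ = 2β/(β,β)`
    (hchi : χ = ∑ β ∈ pos, ((2 : ℝ) / ⟪β, β⟫_ℝ) • β)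
    -- for each `Π_M ⊆ Π`, `w₀(M) ∈ W` is the element of the subgroup `W_M` generated
    -- by the reflections in `Π_M` mapping every positive root in `Δ ∩ span Π_M` to a
    -- negative root
    (w0M : Finset V → W)
    (hw0MW : ∀ M, M ⊆ Pi →
      (w0M M : V ≃ₗᵢ[ℝ] V) ∈ Subgroup.closure {e : V ≃ₗᵢ[ℝ] V | ∃ α ∈ M, e = sRefl α})
    (hw0Mneg : ∀ M, M ⊆ Pi → ∀ α ∈ Δ,
      α ∈ Submodule.span ℝ (M : Set V) → α ∈ pos → -((w0M M : V ≃ₗᵢ[ℝ] V) α) ∈ pos)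
    -- the longest element `w₀ ∈ W`, with `w₀ (Δ⁺) = −Δ⁺`
    (w0 : W)
    (hw0pos : (fun x => (w0 : V ≃ₗᵢ[ℝ] V) x) '' (pos : Set V)
      = (fun x => -x) '' (pos : Set V)) :
    ∀ M', M' ⊆ Pi →
      Bform Δ pos χ W (Finsupp.single w0 1) (xiElt W w0M M')
        = (-(RatFunc.X : RatFunc ℚ)) ^ (Pi.card - M'.card)
          * Bform Δ pos χ W (xiElt W w0M M') (xiElt W w0M M') := by
  classical
  intro M' hM'
  -- trivial consequences
  have hne0 : ∀ α ∈ Δ, α ≠ 0 := fun α hα h => hzero (h ▸ hα)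
  have hΔpos : ∀ α ∈ Δ, α ∉ pos → -α ∈ pos := by
    intro α hα h
    by_contra h'
    exact h ((hpart α hα).mpr h')
  -- formula for the reflection
  have hsRefl : ∀ α : V, α ≠ 0 → ∀ x : V,
      sRefl α x = x - (2 * ⟪x, α⟫_ℝ / ⟪α, α⟫_ℝ) • α := by
    intro α hα x
    unfold sRefl
    rw [Submodule.reflection_orthogonal_apply, Submodule.reflection_apply, Submodule.starProjection_singleton,
      real_inner_comm x α, ← real_inner_self_eq_norm_sq]
    simp only [RCLike.ofReal_real_eq_id, id_eq]
    module
  have hsRefl_self : ∀ α : V, sRefl α α = -α := fun α =>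
    Submodule.reflection_orthogonalComplement_singleton_eq_neg α
  have hinv : ∀ β γ : V, sRefl β (sRefl β γ) = γ := fun β γ => Submodule.reflection_reflection (K := (ℝ ∙ β)ᗮ) γ
  -- linear independence, workable form
  have hindep' : LinearIndependent ℝ (fun i : {x : V // x ∈ Pi} => (i : V)) :=
    hindep.comp (fun i => ⟨i.1, i.2⟩) (fun i j hij => Subtype.ext (congrArg Subtype.val hij))
  have hind : ∀ f : V → ℝ, ∑ δ ∈ Pi, f δ • δ = 0 → ∀ δ ∈ Pi, f δ = 0 := by
    intro f hf δ hδ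
    have hsum : ∑ i : {x : V // x ∈ Pi}, f i • (i : V) = 0 :=
      (Finset.sum_coe_sort Pi (fun δ => f δ • δ)).trans hf
    exact Fintype.linearIndependent_iff.mp hindep' (fun i => f i) hsum ⟨δ, hδ⟩
  have hnegβpos : ∀ β ∈ Pi, -β ∉ pos := fun β hβ =>
    (hpart β (hposΔ (hPipos hβ))).mp (hPipos hβ)
  -- simple reflections permute the other positive roots
  have hsperm : ∀ β ∈ Pi, ∀ γ ∈ pos, γ ≠ β → sRefl β γ ∈ pos := by
    intro β hβ γ hγ hne
    have hβΔ : β ∈ Δ := hposΔ (hPipos hβ)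
    have hγΔ : γ ∈ Δ := hposΔ hγ
    have hsΔ : sRefl β γ ∈ Δ := hrefl β hβΔ γ hγΔ
    by_contra h
    have hneg : -(sRefl β γ) ∈ pos := hΔpos _ hsΔ h
    obtain ⟨c, hc⟩ := hcomb γ hγ
    obtain ⟨m, hm⟩ := hcomb _ hneg
    have hex : ∃ δ ∈ Pi, δ ≠ β ∧ c δ ≠ 0 := by
      by_contra hno
      push_neg at hno
      have hγβ : γ = (c β : ℝ) • β := by
        rw [hc, Finset.sum_eq_single_of_mem β hβ
          (fun δ hδ hδne => by rw [hno δ hδ hδne]; simp)]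
      rcases hred β hβΔ (c β : ℝ) (by rw [← hγβ]; exact hγΔ) with h1 | h1
      · rw [h1, one_smul] at hγβ; exact hne hγβ
      · have h2 : (0:ℝ) ≤ (c β : ℝ) := Nat.cast_nonneg _
        rw [h1] at h2; linarith
    obtain ⟨δ₀, hδ₀, hδ₀ne, hδ₀c⟩ := hex
    have hs := hsRefl β (hne0 β hβΔ) γ
    set t : ℝ := 2 * ⟪γ, β⟫_ℝ / ⟪β, β⟫_ℝ with ht
    have hsum : ∑ δ ∈ Pi,
        (((c δ : ℝ) + (m δ : ℝ)) - (if δ = β then t else 0)) • δ = 0 := by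
      have e : ∀ δ ∈ Pi, (((c δ : ℝ) + (m δ : ℝ)) - (if δ = β then t else 0)) • δ
          = ((c δ : ℝ) • δ + (m δ : ℝ) • δ) - (if δ = β then t else 0) • δ :=
        fun δ _ => by rw [sub_smul, add_smul]
      rw [Finset.sum_congr rfl e, Finset.sum_sub_distrib, Finset.sum_add_distrib]
      have e2 : ∑ δ ∈ Pi, (if δ = β then t else 0) • δ = t • β := by
        rw [Finset.sum_congr rfl (fun δ _ => by rw [ite_smul, zero_smul]),
          Finset.sum_ite_eq' Pi β (fun δ => t • δ), if_pos hβ]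
      rw [e2, ← hc, ← hm, hs]
      abel
    have hz := hind _ hsum δ₀ hδ₀
    rw [if_neg hδ₀ne] at hz
    have h1 : (1:ℝ) ≤ (c δ₀ : ℝ) := by exact_mod_cast Nat.one_le_iff_ne_zero.mpr hδ₀c
    have h2 : (0:ℝ) ≤ (m δ₀ : ℝ) := Nat.cast_nonneg _
    linarith
  -- image of positive roots under a simple reflection
  have himg : ∀ β ∈ Pi, pos.image (fun γ => sRefl β γ) = insert (-β) (pos.erase β) := by
    intro β hβ
    apply Finset.ext; intro δ
    simp only [Finset.mem_image, Finset.mem_insert, Finset.mem_erase]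
    constructor
    · rintro ⟨γ, hγ, rfl⟩
      rcases eq_or_ne γ β with rfl | hne
      · left; exact hsRefl_self γ
      · right
        refine ⟨fun h => ?_, hsperm β hβ γ hγ hne⟩
        have hγβ : γ = -β := by rw [← hinv β γ, h, hsRefl_self]
        exact hnegβpos β hβ (hγβ ▸ hγ)
    · rintro (rfl | ⟨hne, hδ⟩)
      · exact ⟨β, hPipos hβ, hsRefl_self β⟩
      · exact ⟨sRefl β δ, hsperm β hβ δ hδ hne, hinv β δ⟩
  -- the key computation : ⟪β, χ⟫ = 2 for simple β
  have hip' : ∀ β ∈ Pi, ⟪β, χ⟫_ℝ = 2 := by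
    intro β hβ
    have hβpos := hPipos hβ
    have hβΔ := hposΔ hβpos
    have hβ0 := hne0 β hβΔ
    have hββ : ⟪β, β⟫_ℝ ≠ 0 := inner_self_ne_zero.mpr hβ0
    have hinj2 : ∀ γ₁ ∈ pos, ∀ γ₂ ∈ pos, sRefl β γ₁ = sRefl β γ₂ → γ₁ = γ₂ :=
      fun γ₁ _ γ₂ _ h => (sRefl β).injective h
    have hnotin : -β ∉ pos.erase β := fun h => hnegβpos β hβ (Finset.mem_of_mem_erase h)
    have hchi2 : sRefl β χ = χ - (4 / ⟪β, β⟫_ℝ) • β := by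
      have step1 : sRefl β χ = ∑ γ ∈ pos, ((2:ℝ) / ⟪γ, γ⟫_ℝ) • sRefl β γ := by
        rw [hchi, map_sum]
        exact Finset.sum_congr rfl fun γ _ => by rw [LinearIsometryEquiv.map_smul]
      have step2 : ∑ γ ∈ pos, ((2:ℝ) / ⟪γ, γ⟫_ℝ) • sRefl β γ
          = ∑ γ ∈ pos, ((2:ℝ) / ⟪sRefl β γ, sRefl β γ⟫_ℝ) • sRefl β γ :=
        Finset.sum_congr rfl fun γ _ => by rw [LinearIsometryEquiv.inner_map_map]
      have step3 : ∑ γ ∈ pos, ((2:ℝ) / ⟪sRefl β γ, sRefl β γ⟫_ℝ) • sRefl β γ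
          = ∑ δ ∈ pos.image (fun γ => sRefl β γ), ((2:ℝ) / ⟪δ, δ⟫_ℝ) • δ :=
        (Finset.sum_image (f := fun δ => ((2:ℝ) / ⟪δ, δ⟫_ℝ) • δ) (g := fun γ => sRefl β γ) hinj2).symm
      have step6 : χ = ((2:ℝ) / ⟪β, β⟫_ℝ) • β + ∑ δ ∈ pos.erase β, ((2:ℝ) / ⟪δ, δ⟫_ℝ) • δ := by
        rw [hchi, ← Finset.add_sum_erase pos _ hβpos]
      rw [step1, step2, step3, himg β hβ, Finset.sum_insert hnotin, inner_neg_neg, step6]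
      module
    have h1 := hsRefl β hβ0 χ
    have h3 : (2 * ⟪χ, β⟫_ℝ / ⟪β, β⟫_ℝ) • β = (4 / ⟪β, β⟫_ℝ) • β :=
      sub_right_inj.mp (h1.symm.trans hchi2)
    have h4 : (2 * ⟪χ, β⟫_ℝ / ⟪β, β⟫_ℝ - 4 / ⟪β, β⟫_ℝ) • β = 0 := by
      rw [sub_smul, h3, sub_self]
    rcases smul_eq_zero.mp h4 with h | h
    · rw [real_inner_comm]
      field_simp at h
      linarith
    · exact absurd h hβ0
  -- heights
  have hheight : ∀ α ∈ pos, ∃ k : ℕ, 1 ≤ k ∧ ⟪α, χ⟫_ℝ = 2 * k ∧ (k = 1 → α ∈ Pi) := by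
    intro α hα
    obtain ⟨c, hc⟩ := hcomb α hα
    refine ⟨∑ β ∈ Pi, c β, ?_, ?_, ?_⟩
    · by_contra h
      push_neg at h
      have hz : ∀ β ∈ Pi, c β = 0 := fun β hβ =>
        Finset.sum_eq_zero_iff.mp (Nat.lt_one_iff.mp h) β hβ
      have hα0 : α = 0 := by
        rw [hc]
        exact Finset.sum_eq_zero fun β hβ => by rw [hz β hβ]; simp
      exact hzero (hα0 ▸ hposΔ hα)
    · rw [hc, sum_inner]
      rw [Finset.sum_congr rfl fun β hβ => by rw [real_inner_smul_left, hip' β hβ]]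
      push_cast
      rw [Finset.mul_sum]
      exact Finset.sum_congr rfl fun β hβ => by ring
    · intro h1
      obtain ⟨β₀, hβ₀, hcβ₀⟩ : ∃ β ∈ Pi, c β ≠ 0 := by
        by_contra h
        push_neg at h
        rw [Finset.sum_eq_zero h] at h1
        omega
      have herase := Finset.add_sum_erase Pi c hβ₀
      have h0 : ∀ β ∈ Pi.erase β₀, c β = 0 := by
        intro β hβ
        have hz : ∑ β ∈ Pi.erase β₀, c β = 0 := by omega
        exact Finset.sum_eq_zero_iff.mp hz β hβ
      have hcβ1 : c β₀ = 1 := by omega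
      have hαβ : α = β₀ := by
        rw [hc, Finset.sum_eq_single_of_mem β₀ hβ₀
          (fun β hβ hne => by rw [h0 β (Finset.mem_erase.mpr ⟨hne, hβ⟩)]; simp), hcβ1]
        simp
      rw [hαβ]; exact hβ₀
  -- the sets r_0 and r_2
  have hr0 : ∀ w : V ≃ₗᵢ[ℝ] V, rW Δ pos χ 0 w = (∅ : Set V) := by
    intro w
    refine Set.eq_empty_iff_forall_notMem.mpr fun α hα => ?_
    obtain ⟨hαΔ, h0, -⟩ := hα
    norm_num at h0
    rcases em (α ∈ pos) with hp | hp
    · obtain ⟨k, hk1, hk2, -⟩ := hheight α hp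
      have : (1:ℝ) ≤ (k:ℝ) := by exact_mod_cast hk1
      rw [h0] at hk2
      linarith
    · obtain ⟨k, hk1, hk2, -⟩ := hheight (-α) (hΔpos α hαΔ hp)
      rw [inner_neg_left, h0] at hk2
      have : (1:ℝ) ≤ (k:ℝ) := by exact_mod_cast hk1
      linarith
  have hr2 : ∀ w : V ≃ₗᵢ[ℝ] V,
      rW Δ pos χ 2 w = ↑(Pi.filter fun α => w α ∈ pos) := by
    intro w
    ext α
    simp only [rW, Set.mem_setOf_eq, Finset.coe_filter, Finset.mem_coe, Finset.mem_filter]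
    constructor
    · rintro ⟨hαΔ, h2, hw⟩
      norm_num at h2
      have hαpos : α ∈ pos := by
        by_contra h
        obtain ⟨k, hk1, hk2, -⟩ := hheight (-α) (hΔpos α hαΔ h)
        rw [inner_neg_left, h2] at hk2
        have : (1:ℝ) ≤ (k:ℝ) := by exact_mod_cast hk1
        linarith
      obtain ⟨k, hk1, hk2, hk3⟩ := hheight α hαpos
      have hk : (k:ℝ) = 1 := by rw [h2] at hk2; linarith
      exact ⟨hk3 (by exact_mod_cast hk), hw⟩
    · rintro ⟨hPi, hw⟩
      refine ⟨hposΔ (hPipos hPi), ?_, hw⟩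
      rw [hip' α hPi]; norm_num
  -- properties of w₀(M)
  have hWM : ∀ M, M ⊆ Pi →
      (∀ x : V, (w0M M : V ≃ₗᵢ[ℝ] V) x - x ∈ Submodule.span ℝ (M : Set V))
        ∧ ∀ δ ∈ Δ, (w0M M : V ≃ₗᵢ[ℝ] V) δ ∈ Δ := by
    intro M hM
    have hmem := hw0MW M hM
    refine Subgroup.closure_induction
      (p := fun g _ => (∀ x : V, g x - x ∈ Submodule.span ℝ (M : Set V))
        ∧ ∀ δ ∈ Δ, g δ ∈ Δ) ?_ ?_ ?_ ?_ hmem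
    · rintro e ⟨α, hαM, rfl⟩
      have hαΔ : α ∈ Δ := hposΔ (hPipos (hM hαM))
      constructor
      · intro x
        rw [hsRefl α (hne0 α hαΔ) x, sub_sub_cancel_left]
        exact neg_mem (Submodule.smul_mem _ _
          (Submodule.subset_span (Finset.mem_coe.mpr hαM)))
      · intro δ hδ; exact hrefl α hαΔ δ hδ
    · constructor
      · intro x; simp
      · intro δ hδ; simpa using hδ
    · rintro g h _ _ ⟨hg1, hg2⟩ ⟨hh1, hh2⟩
      constructor
      · intro x
        rw [show (g * h) x = g (h x) from rfl,
          show g (h x) - x = (g (h x) - h x) + (h x - x) by abel]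
        exact add_mem (hg1 (h x)) (hh1 x)
      · intro δ hδ
        rw [show (g * h) δ = g (h δ) from rfl]
        exact hg2 _ (hh2 δ hδ)
    · rintro g _ ⟨hg1, hg2⟩
      constructor
      · intro x
        have h1 := hg1 (g⁻¹ x)
        have e : g (g⁻¹ x) = x := by
          rw [show g (g⁻¹ x) = (g * g⁻¹) x from rfl, mul_inv_cancel]
          rfl
        rw [e] at h1
        have h2 := neg_mem h1
        rw [neg_sub] at h2
        exact h2
      · intro δ hδ
        have himg2 : Finset.image (fun y => g y) Δ = Δ := by
          apply Finset.eq_of_subset_of_card_le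
          · intro y hy
            obtain ⟨ε, hε, rfl⟩ := Finset.mem_image.mp hy
            exact hg2 ε hε
          · rw [Finset.card_image_of_injective Δ g.injective]
        have hmem2 : δ ∈ Finset.image (fun y => g y) Δ := by rw [himg2]; exact hδ
        obtain ⟨ε, hε, hε2⟩ := Finset.mem_image.mp hmem2
        have : g⁻¹ δ = ε := by
          rw [← hε2, show g⁻¹ (g ε) = (g⁻¹ * g) ε from rfl, inv_mul_cancel]
          rfl
        rw [this]; exact hε
  have hposM : ∀ M, M ⊆ Pi → ∀ α ∈ Pi,
      ((w0M M : V ≃ₗᵢ[ℝ] V) α ∈ pos ↔ α ∉ M) := by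
    intro M hM α hα
    obtain ⟨hspanM, hΔM⟩ := hWM M hM
    have hαΔ : α ∈ Δ := hposΔ (hPipos hα)
    have hwαΔ : (w0M M : V ≃ₗᵢ[ℝ] V) α ∈ Δ := hΔM α hαΔ
    constructor
    · intro hwpos hαM
      have hneg := hw0Mneg M hM α hαΔ
        (Submodule.subset_span (Finset.mem_coe.mpr hαM)) (hPipos hα)
      exact (hpart _ hwαΔ).mp hwpos hneg
    · intro hαM
      by_contra h
      have hneg : -((w0M M : V ≃ₗᵢ[ℝ] V) α) ∈ pos := hΔpos _ hwαΔ h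
      obtain ⟨m, hm⟩ := hcomb _ hneg
      obtain ⟨r, -, hr⟩ := Submodule.mem_span_finset.mp (hspanM α)
      have hsum : ∑ δ ∈ Pi,
          (((if δ ∈ M then r δ else 0) + (m δ : ℝ)) + (if δ = α then (1:ℝ) else 0)) • δ
            = 0 := by
        have e : ∀ δ ∈ Pi,
            (((if δ ∈ M then r δ else 0) + (m δ : ℝ)) + (if δ = α then (1:ℝ) else 0)) • δ
            = (if δ ∈ M then r δ else 0) • δ + (m δ : ℝ) • δ
                + (if δ = α then (1:ℝ) else 0) • δ :=
          fun δ _ => by rw [add_smul, add_smul]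
        rw [Finset.sum_congr rfl e, Finset.sum_add_distrib, Finset.sum_add_distrib]
        have e1 : ∑ δ ∈ Pi, (if δ ∈ M then r δ else 0) • δ = ∑ δ ∈ M, r δ • δ := by
          rw [Finset.sum_congr rfl (fun δ _ => by rw [ite_smul, zero_smul]),
            Finset.sum_ite_mem, Finset.inter_eq_right.mpr hM]
        have e2 : ∑ δ ∈ Pi, (if δ = α then (1:ℝ) else 0) • δ = α := by
          rw [Finset.sum_congr rfl (fun δ _ => by rw [ite_smul, zero_smul]),
            Finset.sum_ite_eq' Pi α (fun δ => (1:ℝ) • δ), if_pos hα, one_smul]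
        rw [e1, e2, hr, ← hm]
        abel
      have hz := hind _ hsum α hα
      rw [if_neg hαM, if_pos rfl, zero_add] at hz
      have h2 : (0:ℝ) ≤ (m α : ℝ) := Nat.cast_nonneg _
      linarith
  -- the filters
  have hfw0 : Pi.filter (fun α => (w0 : V ≃ₗᵢ[ℝ] V) α ∈ pos) = ∅ := by
    rw [Finset.filter_eq_empty_iff]
    intro α hα h
    have hmem : (w0 : V ≃ₗᵢ[ℝ] V) α
        ∈ (fun x => (w0 : V ≃ₗᵢ[ℝ] V) x) '' (pos : Set V) :=
      ⟨α, Finset.mem_coe.mpr (hPipos hα), rfl⟩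
    rw [hw0pos] at hmem
    obtain ⟨γ, hγ, hγ2⟩ := hmem
    rw [← hγ2] at h
    exact (hpart γ (hposΔ (Finset.mem_coe.mp hγ))).mp (Finset.mem_coe.mp hγ) h
  have hfM : ∀ M, M ⊆ Pi →
      Pi.filter (fun α => (w0M M : V ≃ₗᵢ[ℝ] V) α ∈ pos) = Pi \ M := by
    intro M hM
    ext α
    simp only [Finset.mem_filter, Finset.mem_sdiff]
    constructor
    · rintro ⟨h1, h2⟩; exact ⟨h1, (hposM M hM α h1).mp h2⟩
    · rintro ⟨h1, h2⟩; exact ⟨h1, (hposM M hM α h1).mpr h2⟩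
  -- tau values
  have htau0 : ∀ M, M ⊆ Pi →
      tau Δ pos χ (w0 : V ≃ₗᵢ[ℝ] V) (w0M M : V ≃ₗᵢ[ℝ] V)
        = ((Pi.card - M.card : ℕ) : ℤ) := by
    intro M hM
    unfold tau
    rw [hr0, hr0, hr2, hr2, hfw0, hfM M hM, ← Finset.coe_symmDiff, Set.ncard_coe_finset,
      show symmDiff (∅ : Finset V) (Pi \ M) = Pi \ M by
        rw [← Finset.bot_eq_empty, bot_symmDiff],
      Finset.card_sdiff_of_subset hM]
    simp [symmDiff_self]
  have htau2 : ∀ M₁, M₁ ⊆ Pi → ∀ M₂, M₂ ⊆ Pi →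
      tau Δ pos χ (w0M M₁ : V ≃ₗᵢ[ℝ] V) (w0M M₂ : V ≃ₗᵢ[ℝ] V)
        = ((symmDiff M₁ M₂).card : ℤ) := by
    intro M₁ hM₁ M₂ hM₂
    unfold tau
    have hsd : symmDiff (Pi \ M₁) (Pi \ M₂) = symmDiff M₁ M₂ := by
      ext a
      have h1 := @hM₁ a
      have h2 := @hM₂ a
      simp only [Finset.mem_symmDiff, Finset.mem_sdiff]
      tauto
    rw [hr0, hr0, hr2, hr2, hfM M₁ hM₁, hfM M₂ hM₂, ← Finset.coe_symmDiff,
      Set.ncard_coe_finset, hsd]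
    simp [symmDiff_self]
  -- compute the two sides
  have hB1 : Bform Δ pos χ W (Finsupp.single w0 1) (xiElt W w0M M')
      = ∑ M ∈ M'.powerset, (RatFunc.X : RatFunc ℚ) ^ (M'.card - M.card)
          * (-(RatFunc.X : RatFunc ℚ))
            ^ (tau Δ pos χ (w0 : V ≃ₗᵢ[ℝ] V) (w0M M : V ≃ₗᵢ[ℝ] V)) := by
    rw [xiElt, map_sum]
    refine Finset.sum_congr rfl fun M hM => ?_
    simp [Bform, Finsupp.linearCombination_single, smul_eq_mul]
  have hB2 : Bform Δ pos χ W (xiElt W w0M M') (xiElt W w0M M')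
      = ∑ M₁ ∈ M'.powerset, ∑ M₂ ∈ M'.powerset,
          (RatFunc.X : RatFunc ℚ) ^ (M'.card - M₁.card)
            * ((RatFunc.X : RatFunc ℚ) ^ (M'.card - M₂.card)
              * (-(RatFunc.X : RatFunc ℚ))
                ^ (tau Δ pos χ (w0M M₁ : V ≃ₗᵢ[ℝ] V) (w0M M₂ : V ≃ₗᵢ[ℝ] V))) := by
    simp only [Bform, xiElt, map_sum, Finsupp.linearCombination_single,
      LinearMap.sum_apply, LinearMap.smul_apply, smul_eq_mul, Finset.mul_sum]
    exact Finset.sum_comm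
  rw [hB1, hB2]
  have h1 : ∑ M ∈ M'.powerset, (RatFunc.X : RatFunc ℚ) ^ (M'.card - M.card)
        * (-(RatFunc.X : RatFunc ℚ))
          ^ (tau Δ pos χ (w0 : V ≃ₗᵢ[ℝ] V) (w0M M : V ≃ₗᵢ[ℝ] V))
      = ∑ M ∈ M'.powerset, (RatFunc.X : RatFunc ℚ) ^ (M'.card - M.card)
        * (-(RatFunc.X : RatFunc ℚ)) ^ (Pi.card - M.card) :=
    Finset.sum_congr rfl fun M hM => by
      rw [htau0 M ((Finset.mem_powerset.mp hM).trans hM'), zpow_natCast]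
  have h2 : ∑ M₁ ∈ M'.powerset, ∑ M₂ ∈ M'.powerset,
        (RatFunc.X : RatFunc ℚ) ^ (M'.card - M₁.card)
          * ((RatFunc.X : RatFunc ℚ) ^ (M'.card - M₂.card)
            * (-(RatFunc.X : RatFunc ℚ))
              ^ (tau Δ pos χ (w0M M₁ : V ≃ₗᵢ[ℝ] V) (w0M M₂ : V ≃ₗᵢ[ℝ] V)))
      = ∑ M₁ ∈ M'.powerset, ∑ M₂ ∈ M'.powerset,
        (RatFunc.X : RatFunc ℚ) ^ (M'.card - M₁.card)
          * ((RatFunc.X : RatFunc ℚ) ^ (M'.card - M₂.card)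
            * (-(RatFunc.X : RatFunc ℚ)) ^ (symmDiff M₁ M₂).card) :=
    Finset.sum_congr rfl fun M₁ h₁ => Finset.sum_congr rfl fun M₂ h₂ => by
      rw [htau2 M₁ ((Finset.mem_powerset.mp h₁).trans hM')
        M₂ ((Finset.mem_powerset.mp h₂).trans hM'), zpow_natCast]
  rw [h1, h2]
  exact keyAlg (RatFunc.X : RatFunc ℚ) M' Pi.card (Finset.card_le_card hM')
end
end

section
/- Let Π be a finite set with n elements, and let ℚ(v) be the field of rational functions in one variable v over ℚ. The 2ⁿ × 2ⁿ matrix whose rows and columns are indexed by the subsets of Π, with (S,T)-entry equal to (−v)^{#(S ∨ T)} (where ∨ is symmetric difference), is invertible over ℚ(v). -/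
open Finset in
lemma pow_card_eq15 {R : Type*} [CommRing R] {ι : Type*} [Fintype ι] [DecidableEq ι]
    (x : R) (A : Finset ι) : x ^ A.card = ∏ i, if i ∈ A then x else 1 := by
  rw [Finset.prod_ite_mem, Finset.univ_inter, Finset.prod_const]

open Finset in
lemma key15 {R : Type*} [CommRing R] {ι : Type*} [Fintype ι] [DecidableEq ι]
    (x : R) (S T : Finset ι) :
    ∑ U : Finset ι, x ^ (symmDiff S U).card * (-x) ^ (symmDiff U T).card
      = if S = T then (1 - x ^ 2) ^ (Fintype.card ι) else 0 := by
  have hterm : ∀ U : Finset ι,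
      x ^ (symmDiff S U).card * (-x) ^ (symmDiff U T).card
        = (∏ i ∈ U, (if i ∈ S then 1 else x) * (if i ∈ T then 1 else -x)) *
          ∏ i ∈ Uᶜ, (if i ∈ S then x else 1) * (if i ∈ T then -x else 1) := by
    intro U
    rw [pow_card_eq15, pow_card_eq15, ← Finset.prod_mul_distrib]
    have : ∀ i : ι, (if i ∈ symmDiff S U then x else 1) * (if i ∈ symmDiff U T then -x else 1)
        = if i ∈ U then (if i ∈ S then 1 else x) * (if i ∈ T then 1 else -x)
          else (if i ∈ S then x else 1) * (if i ∈ T then -x else 1) := by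
      intro i
      simp only [Finset.mem_symmDiff]
      by_cases hS : i ∈ S <;> by_cases hT : i ∈ T <;> by_cases hU : i ∈ U <;> simp [hS, hT, hU]
    rw [Finset.prod_congr rfl fun i _ => this i,
      ← Finset.prod_filter_mul_prod_filter_not univ (· ∈ U)]
    congr 1
    · exact Finset.prod_congr (by ext i; simp) fun i hi => by simp [hi]
    · exact Finset.prod_congr (by ext i; simp) fun i hi => by
        simp [Finset.mem_compl.1 hi]
  rw [Finset.sum_congr rfl fun U _ => hterm U, ← Fintype.prod_add]
  by_cases h : S = T
  · subst h
    rw [if_pos rfl, ← Finset.card_univ, ← Finset.prod_const]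
    apply Finset.prod_congr rfl
    intro i _
    by_cases hS : i ∈ S <;> simp [hS] <;> ring
  · rw [if_neg h]
    have : ¬ symmDiff S T = ∅ := by
      simpa [← Finset.bot_eq_empty, symmDiff_eq_bot] using h
    obtain ⟨i, hi⟩ := Finset.nonempty_iff_ne_empty.2 this
    apply Finset.prod_eq_zero (Finset.mem_univ i)
    rcases Finset.mem_symmDiff.1 hi with ⟨hS, hT⟩ | ⟨hT, hS⟩ <;> simp [hS, hT]

/-- For a finite set of cardinality `n`, the `2ⁿ × 2ⁿ` matrix indexed by subsets, with
`(S,T)` entry `(−v)^{#(S ∆ T)}`, is invertible over `ℚ(v)`. -/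
theorem stmt15 {ι : Type*} [Fintype ι] [DecidableEq ι] (n : ℕ)
    (hn : Fintype.card ι = n) :
    IsUnit
      (Matrix.of fun S T : Finset ι =>
        (-(RatFunc.X : RatFunc ℚ)) ^ (symmDiff S T).card) := by
  set x : RatFunc ℚ := -RatFunc.X with hx
  have hne : (1 - x ^ 2 : RatFunc ℚ) ≠ 0 := by
    intro h
    have : (x : RatFunc ℚ) ^ 2 = 1 := by linear_combination -h
    rw [hx] at this
    have hX2 : (RatFunc.X : RatFunc ℚ) * RatFunc.X = 1 := by linear_combination this
    have := congrArg RatFunc.intDegree hX2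
    rw [RatFunc.intDegree_one, RatFunc.intDegree_mul RatFunc.X_ne_zero RatFunc.X_ne_zero,
      RatFunc.intDegree_X] at this
    omega
  have hcne : ((1 - x ^ 2 : RatFunc ℚ) ^ Fintype.card ι) ≠ 0 := pow_ne_zero _ hne
  refine (Matrix.isUnit_iff_isUnit_det _).2 (Matrix.isUnit_det_of_right_inverse
    (B := Matrix.of fun S T : Finset ι =>
      ((1 - x ^ 2) ^ Fintype.card ι)⁻¹ * (-x) ^ (symmDiff S T).card) ?_)
  ext S T
  simp only [Matrix.mul_apply, Matrix.of_apply, Matrix.one_apply]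
  have hstep : ∀ U : Finset ι,
      (-(RatFunc.X : RatFunc ℚ)) ^ (symmDiff S U).card *
          (((1 - x ^ 2) ^ Fintype.card ι)⁻¹ * (-x) ^ (symmDiff U T).card)
        = ((1 - x ^ 2) ^ Fintype.card ι)⁻¹ *
            (x ^ (symmDiff S U).card * (-x) ^ (symmDiff U T).card) := fun U => by
    rw [hx]; ring
  rw [Finset.sum_congr rfl fun U _ => hstep U, ← Finset.mul_sum, key15]
  split_ifs with h
  · exact inv_mul_cancel₀ hcne
  · exact mul_zero _
end
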